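/- arXiv:0907.1948 — 8 statements merged into one kernel-verified Lean document; each statement's English description precedes it below -/
import Mathlib

section
/- Let U and V be finite sets with |U| = m and |V| = n ≥ 2, let 2 ≤ q ≤ n, and let ε > 0. There exists δ > 0 (depending only on ε, n, q) such that: for every set R of functions from U to V with |R| > (q - 1 + ε)^m, there exists a subset S ⊆ U with |S| ≥ δ·m that is (V, q)-shattered by R. -/
/-- `S` is `(L, q)`-shattered by `R`: there are `q` functions `c_1, …, c_q : S → L`,
pointwise pairwise distinct on `S`, such that every choice function `h : S → [q]`
is realized by the restriction of some `f ∈ R`. -/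
def Shatters {U V : Type*} (R : Set (U → V)) (S : Finset U) (L : Finset V) (q : ℕ) : Prop :=
  ∃ c : Fin q → U → V,
    (∀ i, ∀ x ∈ S, c i x ∈ L) ∧
    (∀ x ∈ S, ∀ i j : Fin q, i ≠ j → c i x ≠ c j x) ∧
    (∀ h : U → Fin q, ∃ f ∈ R, ∀ x ∈ S, f x = c (h x) x)



private lemma aux_choose (q t : ℕ) (hq : 1 ≤ q) : t ≤ q - 1 + t.choose q := by
  rcases le_or_gt t (q-1) with h | h
  · omega
  · have hqt : q ≤ t := by omega
    obtain ⟨s, rfl⟩ := Nat.exists_eq_add_of_le hqt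
    clear h hqt
    induction s with
    | zero => simp [Nat.choose_self]; omega
    | succ s ih =>
      obtain ⟨q', rfl⟩ := Nat.exists_eq_add_of_le hq
      have h1 : (1 + q' + (s+1)).choose (1 + q')
          = (1 + q' + s).choose q' + (1 + q' + s).choose (q' + 1) := by
        have h2 : 1 + q' + (s+1) = (1 + q' + s) + 1 := by omega
        have h3 : 1 + q' = q' + 1 := by omega
        rw [h2, h3, Nat.choose_succ_succ]
      have h4 : 0 < (1 + q' + s).choose q' := Nat.choose_pos (by omega)
      have h5 : (1 + q' + s).choose (q' + 1) = (1 + q' + s).choose (1 + q') := by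
        rw [Nat.add_comm q' 1]
      omega

private lemma shatters_lift {U V : Type*} {R R' : Set (U → V)} {S : Finset U} {L : Finset V} {q : ℕ}
    (h : Shatters R' S L q)
    (hlift : ∀ g ∈ R', ∃ f ∈ R, ∀ y ∈ S, f y = g y) : Shatters R S L q := by
  obtain ⟨c, h1, h2, h3⟩ := h
  refine ⟨c, h1, h2, fun hfun => ?_⟩
  obtain ⟨g, hg, hgc⟩ := h3 hfun
  obtain ⟨f, hf, hfg⟩ := hlift g hg
  exact ⟨f, hf, fun x hx => (hfg x hx).trans (hgc x hx)⟩

private lemma sum_choose_le (m d : ℕ) (y : ℝ) (hy : 0 ≤ y) :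
    ∑ i ∈ Finset.range d, (m.choose i : ℝ) * y ^ i ≤ (1 + y) ^ m := by
  have h1 : (1 + y) ^ m = ∑ i ∈ Finset.range (m+1), (m.choose i : ℝ) * y ^ i := by
    rw [add_comm, add_pow]
    refine Finset.sum_congr rfl fun i _ => ?_
    simp [mul_comm]
  rw [h1]
  rcases le_or_gt d (m+1) with h | h
  · refine Finset.sum_le_sum_of_subset_of_nonneg (Finset.range_subset_range.mpr h) ?_
    intro i _ _; positivity
  · refine le_of_eq ?_
    refine (Finset.sum_subset (Finset.range_subset_range.mpr h.le) ?_).symm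
    intro i _ hi
    have : m < i := by simp at hi; omega
    simp [Nat.choose_eq_zero_of_lt this]

open Finset in
private lemma key {U V : Type} [Fintype U] [Fintype V] [DecidableEq U] [DecidableEq V]
    (q : ℕ) (hq : 2 ≤ q) (v₀ : V) :
    ∀ (A : Finset U) (d : ℕ) (R : Finset (U → V)),
      (∀ f ∈ R, ∀ y, y ∉ A → f y = v₀) →
      (∀ S : Finset U, S ⊆ A → Shatters (R : Set (U → V)) S Finset.univ q → S.card < d) →
      (R.card : ℝ) ≤ ((q : ℝ) - 1) ^ A.card *
        ∑ i ∈ Finset.range d, (A.card.choose i : ℝ) *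
          (((Fintype.card V).choose q : ℝ) / ((q : ℝ) - 1)) ^ i := by
  classical
  have ha : (1:ℝ) ≤ (q:ℝ) - 1 := by
    have : (2:ℝ) ≤ (q:ℝ) := by exact_mod_cast hq
    linarith
  have ha0 : (0:ℝ) < (q:ℝ) - 1 := by linarith
  set K : ℝ := ((Fintype.card V).choose q : ℝ) with hKdef
  set a : ℝ := (q:ℝ) - 1 with hadef
  set L : ℝ := K / a with hLdef
  have hK0 : 0 ≤ K := by positivity
  have hL0 : 0 ≤ L := by positivity
  intro A
  induction A using Finset.induction_on with
  | empty =>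
    intro d R hdef hsh
    by_cases hR : R = ∅
    · have : 0 ≤ a ^ (∅ : Finset U).card *
          ∑ i ∈ Finset.range d, (((∅:Finset U).card.choose i : ℕ):ℝ) * L ^ i := by
        have : ∀ i ∈ Finset.range d, 0 ≤ (((∅:Finset U).card.choose i : ℕ):ℝ) * L ^ i := by
          intro i _; positivity
        have h2 := Finset.sum_nonneg this
        positivity
      simpa [hR] using this
    · obtain ⟨f₀, hf₀⟩ := Finset.nonempty_iff_ne_empty.mpr hR
      have hd : 0 < d := by
        have hsh0 : Shatters (R : Set (U→V)) ∅ Finset.univ q :=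
          ⟨fun _ _ => v₀, by simp, by simp, fun h => ⟨f₀, by simpa using hf₀, by simp⟩⟩
        simpa using hsh ∅ (by simp) hsh0
      have hcard : R.card ≤ 1 := by
        refine Finset.card_le_one.mpr (fun f hf g hg => ?_)
        funext y
        rw [hdef f hf y (by simp), hdef g hg y (by simp)]
      have hsum : (1:ℝ) ≤ ∑ i ∈ Finset.range d, ((Nat.choose 0 i : ℕ):ℝ) * L ^ i := by
        rw [Finset.sum_eq_single_of_mem 0 (Finset.mem_range.mpr hd)]
        · simp
        · intro i _ hi
          have : 0 < i := Nat.pos_of_ne_zero hi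
          simp [Nat.choose_eq_zero_of_lt this]
      have : (R.card : ℝ) ≤ 1 := by exact_mod_cast hcard
      simpa using this.trans hsum
  | @insert x A' hx ih =>
    intro d R hdef hsh
    rcases Nat.eq_zero_or_pos d with rfl | hd
    · have hR : R = ∅ := by
        by_contra hR
        obtain ⟨f₀, hf₀⟩ := Finset.nonempty_iff_ne_empty.mpr hR
        have hsh0 : Shatters (R : Set (U→V)) ∅ Finset.univ q :=
          ⟨fun _ _ => v₀, by simp, by simp, fun h => ⟨f₀, by simpa using hf₀, by simp⟩⟩
        exact absurd (hsh ∅ (by simp) hsh0) (by simp)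
      simp [hR]
    obtain ⟨e, rfl⟩ : ∃ e, d = e + 1 := ⟨d - 1, by omega⟩
    set π : (U → V) → (U → V) := fun f => Function.update f x v₀ with hπ
    set R' : Finset (U → V) := R.image π with hR'
    set Fg : (U → V) → Finset V := fun g =>
      Finset.univ.filter (fun v => Function.update g x v ∈ R) with hFgdef
    set RT : Finset V → Finset (U → V) := fun T =>
      R'.filter (fun g => ∀ v ∈ T, Function.update g x v ∈ R) with hRTdef
    have hrecover : ∀ f : U → V, Function.update (π f) x (f x) = f := by
      intro f
      simp only [hπ]
      rw [Function.update_idem, Function.update_eq_self]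
    have hdef' : ∀ g ∈ R', ∀ y, y ∉ A' → g y = v₀ := by
      intro g hg y hy
      obtain ⟨f, hf, rfl⟩ := Finset.mem_image.mp hg
      by_cases hyx : y = x
      · subst hyx; simp [hπ]
      · rw [show π f y = f y from Function.update_of_ne hyx _ _]
        exact hdef f hf y (by simp [Finset.mem_insert, hyx, hy])
    -- lifting shattering from R' to R
    have hliftR' : ∀ S : Finset U, S ⊆ A' →
        Shatters (R' : Set (U→V)) S Finset.univ q →
        Shatters (R : Set (U→V)) S Finset.univ q := by
      intro S hS hsh'
      refine shatters_lift hsh' ?_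
      intro g hg
      obtain ⟨f, hf, rfl⟩ := Finset.mem_image.mp (Finset.mem_coe.mp hg)
      refine ⟨f, Finset.mem_coe.mpr hf, fun y hy => ?_⟩
      have hyx : y ≠ x := fun h => hx (h ▸ hS hy)
      exact (Function.update_of_ne hyx _ _).symm
    have hshR' : ∀ S : Finset U, S ⊆ A' →
        Shatters (R' : Set (U→V)) S Finset.univ q → S.card < e + 1 := by
      intro S hS h
      exact hsh S (hS.trans (Finset.subset_insert x A')) (hliftR' S hS h)
    -- shattering bound for RT T
    have hshRT : ∀ T ∈ Finset.powersetCard q (Finset.univ : Finset V),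
        ∀ S : Finset U, S ⊆ A' →
        Shatters ((RT T : Finset (U → V)) : Set (U→V)) S Finset.univ q → S.card < e := by
      intro T hT S hS hshS
      have hTc : T.card = q := (Finset.mem_powersetCard.mp hT).2
      obtain ⟨c, hc1, hc2, hc3⟩ := hshS
      set en : Fin q → V := fun i => (T.equivFin.symm (Fin.cast hTc.symm i) : V) with hen
      have hen_mem : ∀ i, en i ∈ T := fun i => (T.equivFin.symm _).2
      have hen_inj : Function.Injective en := by
        intro i j hij
        have h2 := T.equivFin.symm.injective (Subtype.ext hij)
        exact Fin.cast_injective _ h2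
      have hxS : x ∉ S := fun h => hx (hS h)
      have hbig : Shatters (R : Set (U→V)) (insert x S) Finset.univ q := by
        refine ⟨fun i => Function.update (c i) x (en i),
          fun i y _ => Finset.mem_univ _, ?_, ?_⟩
        · intro y hy i j hij
          show Function.update (c i) x (en i) y ≠ Function.update (c j) x (en j) y
          rcases Finset.mem_insert.mp hy with rfl | hyS
          · simpa using fun h => hij (hen_inj h)
          · have hyx : y ≠ x := fun h => hx (h ▸ hS hyS)
            rw [Function.update_of_ne hyx, Function.update_of_ne hyx]
            exact hc2 y hyS i j hij
        · intro h
          obtain ⟨g, hg, hgc⟩ := hc3 h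
          have hgRT : g ∈ RT T := Finset.mem_coe.mp hg
          have hgmem := (Finset.mem_filter.mp hgRT).2
          refine ⟨Function.update g x (en (h x)),
            Finset.mem_coe.mpr (hgmem (en (h x)) (hen_mem _)), ?_⟩
          intro y hy
          show Function.update g x (en (h x)) y = Function.update (c (h y)) x (en (h y)) y
          rcases Finset.mem_insert.mp hy with rfl | hyS
          · simp
          · have hyx : y ≠ x := fun hh => hx (hh ▸ hS hyS)
            rw [Function.update_of_ne hyx, Function.update_of_ne hyx]
            exact hgc y hyS
      have := hsh (insert x S) (Finset.insert_subset_insert x hS) hbig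
      rwa [Finset.card_insert_of_notMem hxS, Nat.add_lt_add_iff_right] at this
    -- counting
    have hc1 : (R.card : ℕ) ≤ ∑ g ∈ R', (Fg g).card := by
      rw [Finset.card_eq_sum_card_fiberwise
        (f := π) (t := R') (fun f hf => Finset.mem_image_of_mem π hf)]
      refine Finset.sum_le_sum ?_
      intro g hg
      refine Finset.card_le_card_of_injOn (fun f => f x) ?_ ?_
      · intro f hf
        obtain ⟨hfR, hfπ⟩ := Finset.mem_filter.mp hf
        have hmem : Function.update g x (f x) ∈ R := by
          rw [← hfπ, hrecover]; exact hfR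
        show f x ∈ Fg g
        simp only [hFgdef, Finset.mem_filter, Finset.mem_univ, true_and]
        exact hmem
      · intro f1 h1 f2 h2 hval
        have hval' : f1 x = f2 x := hval
        have e1 := (Finset.mem_filter.mp (Finset.mem_coe.mp h1)).2
        have e2 := (Finset.mem_filter.mp (Finset.mem_coe.mp h2)).2
        calc f1 = Function.update (π f1) x (f1 x) := (hrecover f1).symm
          _ = Function.update (π f2) x (f2 x) := by rw [e1, e2, hval']
          _ = f2 := hrecover f2
    have hc2 : ∀ g, (Fg g).card ≤ (q - 1) + (Finset.powersetCard q (Fg g)).card := by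
      intro g
      rw [Finset.card_powersetCard]
      exact aux_choose q _ (by omega)
    have hc3 : ∑ g ∈ R', (Finset.powersetCard q (Fg g)).card
        = ∑ T ∈ Finset.powersetCard q (Finset.univ : Finset V), (RT T).card := by
      have hps : ∀ g, Finset.powersetCard q (Fg g)
          = (Finset.powersetCard q (Finset.univ : Finset V)).filter (fun T => T ⊆ Fg g) := by
        intro g; ext T
        simp only [Finset.mem_powersetCard, Finset.mem_filter]
        constructor
        · rintro ⟨h1, h2⟩; exact ⟨⟨Finset.subset_univ T, h2⟩, h1⟩
        · rintro ⟨⟨_, h2⟩, h1⟩; exact ⟨h1, h2⟩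
      calc ∑ g ∈ R', (Finset.powersetCard q (Fg g)).card
          = ∑ g ∈ R', ∑ T ∈ Finset.powersetCard q (Finset.univ : Finset V),
              if T ⊆ Fg g then 1 else 0 := by
            refine Finset.sum_congr rfl fun g _ => ?_
            rw [hps g, Finset.card_filter]
        _ = ∑ T ∈ Finset.powersetCard q (Finset.univ : Finset V), ∑ g ∈ R',
              if T ⊆ Fg g then 1 else 0 := Finset.sum_comm
        _ = ∑ T ∈ Finset.powersetCard q (Finset.univ : Finset V), (RT T).card := by
            refine Finset.sum_congr rfl fun T _ => ?_
            rw [← Finset.card_filter]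
            congr 1
            refine Finset.filter_congr fun g _ => ?_
            simp only [hFgdef, hRTdef]
            constructor
            · intro hsub v hv
              have := hsub hv
              simpa using this
            · intro hall v hv
              simp only [Finset.mem_filter, Finset.mem_univ, true_and]
              exact hall v hv
    -- apply IH
    have hb1 : ((R'.card : ℕ) : ℝ) ≤ a ^ A'.card *
        ∑ i ∈ Finset.range (e+1), (A'.card.choose i : ℝ) * L ^ i :=
      ih (e+1) R' hdef' hshR'
    have hb2 : ∀ T ∈ Finset.powersetCard q (Finset.univ : Finset V),
        (((RT T).card : ℕ) : ℝ) ≤ a ^ A'.card *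
          ∑ i ∈ Finset.range e, (A'.card.choose i : ℝ) * L ^ i := by
      intro T hT
      exact ih e (RT T)
        (fun g hg y hy => hdef' g (Finset.filter_subset _ _ hg) y hy)
        (hshRT T hT)
    -- assemble
    set S1 : ℝ := ∑ i ∈ Finset.range (e+1), (A'.card.choose i : ℝ) * L ^ i with hS1
    set S2 : ℝ := ∑ i ∈ Finset.range e, (A'.card.choose i : ℝ) * L ^ i with hS2
    have hS20 : 0 ≤ S2 := Finset.sum_nonneg fun i _ => by positivity
    have hS10 : 0 ≤ S1 := Finset.sum_nonneg fun i _ => by positivity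
    have hstep1 : (R.card : ℝ) ≤ (q - 1 : ℕ) * R'.card +
        ∑ T ∈ Finset.powersetCard q (Finset.univ : Finset V), ((RT T).card : ℝ) := by
      have h1 : (R.card : ℕ) ≤ (q-1) * R'.card +
          ∑ T ∈ Finset.powersetCard q (Finset.univ : Finset V), (RT T).card := by
        calc R.card ≤ ∑ g ∈ R', (Fg g).card := hc1
          _ ≤ ∑ g ∈ R', ((q - 1) + (Finset.powersetCard q (Fg g)).card) :=
            Finset.sum_le_sum fun g _ => hc2 g
          _ = (q-1) * R'.card + ∑ g ∈ R', (Finset.powersetCard q (Fg g)).card := by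
            rw [Finset.sum_add_distrib, Finset.sum_const, smul_eq_mul]
            ring
          _ = (q-1) * R'.card +
              ∑ T ∈ Finset.powersetCard q (Finset.univ : Finset V), (RT T).card := by
            rw [hc3]
      calc (R.card : ℝ) ≤ (((q-1) * R'.card +
          ∑ T ∈ Finset.powersetCard q (Finset.univ : Finset V), (RT T).card : ℕ) : ℝ) := by
            exact_mod_cast h1
        _ = ((q - 1 : ℕ) : ℝ) * R'.card +
            ∑ T ∈ Finset.powersetCard q (Finset.univ : Finset V), ((RT T).card : ℝ) := by
          push_cast; ring
    have hq1 : ((q - 1 : ℕ) : ℝ) = a := by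
      have : (1:ℕ) ≤ q := by omega
      push_cast [this]
      rfl
    have hstep2 : (R.card : ℝ) ≤ a * (a ^ A'.card * S1) + K * (a ^ A'.card * S2) := by
      refine hstep1.trans ?_
      have t1 : ((q - 1 : ℕ) : ℝ) * (R'.card : ℝ) ≤ a * (a ^ A'.card * S1) := by
        rw [hq1]
        exact mul_le_mul_of_nonneg_left hb1 (by linarith)
      have t2 : ∑ T ∈ Finset.powersetCard q (Finset.univ : Finset V), ((RT T).card : ℝ)
          ≤ K * (a ^ A'.card * S2) := by
        calc ∑ T ∈ Finset.powersetCard q (Finset.univ : Finset V), ((RT T).card : ℝ)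
            ≤ ∑ _T ∈ Finset.powersetCard q (Finset.univ : Finset V),
                (a ^ A'.card * S2) := Finset.sum_le_sum hb2
          _ = ((Finset.powersetCard q (Finset.univ : Finset V)).card : ℝ)
                * (a ^ A'.card * S2) := by rw [Finset.sum_const, nsmul_eq_mul]
          _ = K * (a ^ A'.card * S2) := by
              rw [Finset.card_powersetCard, Finset.card_univ, hKdef]
      linarith
    -- final algebra
    have hKaL : K = a * L := by
      rw [hLdef]; field_simp
    have hpascal : S1 + L * S2
        = ∑ i ∈ Finset.range (e+1), ((A'.card+1).choose i : ℝ) * L ^ i := by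
      rw [hS1, hS2,
        Finset.sum_range_succ' (fun i => (((A'.card+1).choose i : ℕ) : ℝ) * L ^ i) e,
        Finset.sum_range_succ' (fun i => ((A'.card.choose i : ℕ) : ℝ) * L ^ i) e,
        Finset.mul_sum]
      have hterm : ∀ i, ((A'.card.choose (i+1) : ℕ) : ℝ) * L ^ (i+1)
          + L * (((A'.card.choose i : ℕ) : ℝ) * L ^ i)
          = (((A'.card+1).choose (i+1) : ℕ) : ℝ) * L ^ (i+1) := by
        intro i
        rw [Nat.choose_succ_succ]
        push_cast
        ring
      have hsum : (∑ i ∈ Finset.range e, ((A'.card.choose (i+1) : ℕ):ℝ) * L ^ (i+1))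
          + (∑ i ∈ Finset.range e, L * (((A'.card.choose i : ℕ):ℝ) * L ^ i))
          = ∑ i ∈ Finset.range e, (((A'.card+1).choose (i+1) : ℕ):ℝ) * L ^ (i+1) := by
        rw [← Finset.sum_add_distrib]
        exact Finset.sum_congr rfl fun i _ => hterm i
      simp only [Nat.choose_zero_right, Nat.cast_one, pow_zero, mul_one]
      linarith [hsum]
    have hfinal : a * (a ^ A'.card * S1) + K * (a ^ A'.card * S2)
        = a ^ (A'.card + 1) *
          ∑ i ∈ Finset.range (e+1), ((A'.card+1).choose i : ℝ) * L ^ i := by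
      rw [← hpascal, hKaL, pow_succ]
      ring
    have hcardins : (insert x A').card = A'.card + 1 := Finset.card_insert_of_notMem hx
    rw [hcardins]
    exact hstep2.trans (le_of_eq hfinal)

theorem stmt0 (n q : ℕ) (hn : 2 ≤ n) (hq2 : 2 ≤ q) (hqn : q ≤ n)
    (ε : ℝ) (hε : 0 < ε) :
    ∃ δ : ℝ, 0 < δ ∧
      ∀ (U V : Type) [Fintype U] [Fintype V] (m : ℕ),
        Fintype.card U = m → Fintype.card V = n →
        ∀ R : Finset (U → V), ((q : ℝ) - 1 + ε) ^ m < (R.card : ℝ) →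
          ∃ S : Finset U, δ * m ≤ (S.card : ℝ) ∧
            Shatters (R : Set (U → V)) S Finset.univ q := by
  classical
  have haq : (2:ℝ) ≤ (q:ℝ) := by exact_mod_cast hq2
  set a : ℝ := (q:ℝ) - 1 with hadef
  have ha1 : (1:ℝ) ≤ a := by rw [hadef]; linarith
  have ha0 : (0:ℝ) < a := by linarith
  set K : ℝ := (n.choose q : ℝ) with hKdef
  have hK1 : (1:ℝ) ≤ K := by
    rw [hKdef]
    exact_mod_cast Nat.one_le_iff_ne_zero.mpr (Nat.choose_pos hqn).ne'
  set x : ℝ := min (ε/2) 1 with hxdef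
  have hx0 : 0 < x := lt_min (by linarith) one_pos
  have hx1 : x ≤ 1 := min_le_right _ _
  have hxε : x < ε := lt_of_le_of_lt (min_le_left _ _) (by linarith)
  set B : ℝ := K / x with hBdef
  have hB1 : 1 ≤ B := (one_le_div hx0).mpr (le_trans hx1 hK1)
  have hB0 : 0 < B := by linarith
  set ρ : ℝ := (a + ε) / (a + x) with hρdef
  have hax0 : 0 < a + x := by linarith
  have hρ1 : 1 < ρ := (one_lt_div hax0).mpr (by linarith)
  have hρ0 : 0 < ρ := by linarith
  have hlogρ : 0 < Real.log ρ := Real.log_pos hρ1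
  have hlogB : 0 ≤ Real.log B := Real.log_nonneg hB1
  set δ : ℝ := min 1 (Real.log ρ / (Real.log B + 1)) with hδdef
  have hδ0 : 0 < δ := lt_min one_pos (by positivity)
  have hBδρ : B ^ (δ:ℝ) ≤ ρ := by
    set t : ℝ := Real.log ρ / (Real.log B + 1) with htdef
    have ht0 : 0 ≤ t := by positivity
    have h1 : B ^ (δ:ℝ) ≤ B ^ (t:ℝ) :=
      Real.rpow_le_rpow_of_exponent_le hB1 (min_le_right _ _)
    have h2 : B ^ (t:ℝ) ≤ ρ := by
      rw [Real.rpow_def_of_pos hB0]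
      have h3 : t * Real.log B ≤ Real.log ρ := by
        have h4 : t * Real.log B ≤ t * (Real.log B + 1) :=
          mul_le_mul_of_nonneg_left (by linarith) ht0
        have h5 : t * (Real.log B + 1) = Real.log ρ := by
          rw [htdef]; field_simp
        linarith
      calc Real.exp (Real.log B * t) ≤ Real.exp (Real.log ρ) := by
            apply Real.exp_le_exp.mpr; rw [mul_comm]; exact h3
        _ = ρ := Real.exp_log hρ0
    exact h1.trans h2
  refine ⟨δ, hδ0, ?_⟩
  intro U V _ _ m hU hV R hbig
  by_contra hcon
  push_neg at hcon
  have hV0 : 0 < Fintype.card V := by omega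
  obtain ⟨v₀⟩ := Fintype.card_pos_iff.mp hV0
  set d : ℕ := ⌈δ * m⌉₊ with hddef
  have hδm0 : 0 ≤ δ * m := by positivity
  have hshbound : ∀ S : Finset U, S ⊆ Finset.univ →
      Shatters (R : Set (U → V)) S Finset.univ q → S.card < d := by
    intro S _ hS
    have h1 : ¬ (δ * m ≤ (S.card : ℝ)) := fun h => hcon S h hS
    have h2 : (S.card : ℝ) < δ * m := not_le.mp h1
    have h3 : (S.card : ℝ) < (d : ℝ) := h2.trans_le (Nat.le_ceil _)
    exact_mod_cast h3
  have hb := key q hq2 v₀ Finset.univ d R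
    (fun f _ y hy => absurd (Finset.mem_univ y) hy) hshbound
  rw [Finset.card_univ, hU, hV] at hb
  -- hb : R.card ≤ a^m * Σ_{i<d} C(m,i) (K/a)^i
  have hterm : ∑ i ∈ Finset.range d, (m.choose i : ℝ) * (K/a)^i
      ≤ B ^ (d-1) * ∑ i ∈ Finset.range d, (m.choose i : ℝ) * (x/a)^i := by
    rw [Finset.mul_sum]
    refine Finset.sum_le_sum fun i hi => ?_
    have hid : i ≤ d - 1 := by have := Finset.mem_range.mp hi; omega
    have hKa : (K/a)^i = (x/a)^i * B^i := by
      rw [← mul_pow]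
      congr 1
      rw [hBdef]
      field_simp
    rw [hKa]
    have hBpow : B^i ≤ B^(d-1) := pow_le_pow_right₀ hB1 hid
    have h0 : 0 ≤ (m.choose i:ℝ) * (x/a)^i := by positivity
    calc (m.choose i:ℝ) * ((x/a)^i * B^i)
        = ((m.choose i:ℝ) * (x/a)^i) * B^i := by ring
      _ ≤ ((m.choose i:ℝ) * (x/a)^i) * B^(d-1) :=
          mul_le_mul_of_nonneg_left hBpow h0
      _ = B^(d-1) * ((m.choose i:ℝ) * (x/a)^i) := by ring
  have hsum2 : ∑ i ∈ Finset.range d, (m.choose i : ℝ) * (x/a)^i ≤ (1 + x/a)^m :=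
    sum_choose_le m d (x/a) (by positivity)
  have hBd : B ^ (d-1) ≤ ρ ^ m := by
    have hd1 : ((d-1:ℕ):ℝ) ≤ δ * m := by
      rcases Nat.eq_zero_or_pos d with h0 | h1
      · simp [h0]; positivity
      · have h2 : (d:ℝ) < δ * m + 1 := by
          rw [hddef]; exact Nat.ceil_lt_add_one hδm0
        have h3 : ((d-1:ℕ):ℝ) = (d:ℝ) - 1 := by
          have : (1:ℕ) ≤ d := h1
          push_cast [this]
          ring
        linarith
    have h1 : (B:ℝ) ^ (d-1) = B ^ (((d-1:ℕ):ℝ)) := (Real.rpow_natCast B (d-1)).symm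
    have h2 : B ^ (((d-1:ℕ):ℝ)) ≤ B ^ (δ * m) :=
      Real.rpow_le_rpow_of_exponent_le hB1 hd1
    have h3 : B ^ (δ * (m:ℝ)) = (B ^ (δ:ℝ)) ^ m := by
      rw [Real.rpow_mul hB0.le, Real.rpow_natCast]
    have h4 : (B ^ (δ:ℝ)) ^ m ≤ ρ ^ m :=
      pow_le_pow_left₀ (Real.rpow_nonneg hB0.le δ) hBδρ m
    rw [h1]
    calc B ^ (((d-1:ℕ):ℝ)) ≤ B ^ (δ * (m:ℝ)) := h2
      _ = (B ^ (δ:ℝ)) ^ m := h3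
      _ ≤ ρ ^ m := h4
  have hax : a * (1 + x/a) = a + x := by field_simp
  have hfin : (R.card : ℝ) ≤ (a + ε)^m := by
    have hBd0 : 0 ≤ B ^ (d-1) := by positivity
    have s1 : (R.card : ℝ) ≤ a^m * (B ^ (d-1) * ∑ i ∈ Finset.range d, (m.choose i : ℝ) * (x/a)^i) :=
      hb.trans (mul_le_mul_of_nonneg_left hterm (by positivity))
    have s2 : a^m * (B ^ (d-1) * ∑ i ∈ Finset.range d, (m.choose i : ℝ) * (x/a)^i)
        ≤ a^m * (B ^ (d-1) * (1 + x/a)^m) := by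
      refine mul_le_mul_of_nonneg_left (mul_le_mul_of_nonneg_left hsum2 hBd0) (by positivity)
    have s3 : a^m * (B ^ (d-1) * (1 + x/a)^m) ≤ a^m * (ρ^m * (1 + x/a)^m) := by
      refine mul_le_mul_of_nonneg_left (mul_le_mul_of_nonneg_right hBd ?_) (by positivity)
      positivity
    have s4 : a^m * (ρ^m * (1 + x/a)^m) = (a + ε)^m := by
      rw [hρdef]
      rw [show a^m * (((a + ε) / (a + x))^m * (1 + x/a)^m)
          = ((a + ε) / (a + x) * (a * (1 + x/a)))^m by rw [mul_pow, mul_pow]; ring]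
      rw [hax, div_mul_cancel₀ _ hax0.ne']
    linarith
  rw [hadef] at hfin
  linarith
end

section
/- Let F_q(m, n, d) denote the maximum cardinality of a set R of functions from an m-element set B to an n-element set A such that R does not (A, q)-shatter any (d+1)-element subset of B (where 2 ≤ q ≤ n). Then F_q(m, n, d) ≤ (q-1)·F_q(m-1, n, d) + n·C(n, q)·F_q(m-1, n, d-1) for all m ≥ 1, where C(n,q) is the binomial coefficient. -/
/-- `Fq q m n d`: the maximum cardinality of a family `R` of functions from an
`m`-element set to an `n`-element set that does not `(A, q)`-shatter any
`(d+1)`-element subset of the domain. -/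
noncomputable def Fq (q m n d : ℕ) : ℕ :=
  sSup {r : ℕ | ∃ R : Finset (Fin m → Fin n), R.card = r ∧
    ∀ S : Finset (Fin m), S.card = d + 1 →
      ¬ Shatters (R : Set (Fin m → Fin n)) S Finset.univ q}

open Finset

lemma aux_le_Fq (q m n d : ℕ) (R : Finset (Fin m → Fin n))
    (h : ∀ S : Finset (Fin m), S.card = d + 1 →
      ¬ Shatters (R : Set (Fin m → Fin n)) S Finset.univ q) :
    R.card ≤ Fq q m n d := by
  apply le_csSup
  · refine ⟨(Finset.univ : Finset (Fin m → Fin n)).card, ?_⟩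
    rintro r ⟨R', hc, -⟩
    exact hc ▸ Finset.card_le_univ R'
  · exact ⟨R, rfl, h⟩

lemma aux_choose_ge (t q : ℕ) (hq : 1 ≤ q) : t - (q - 1) ≤ t.choose q := by
  induction t with
  | zero => simp
  | succ t ih =>
    rcases lt_or_ge (t + 1) q with h | h
    · have : t + 1 - (q - 1) = 0 := by omega
      simp [this]
    · obtain ⟨p, rfl⟩ := Nat.exists_eq_add_of_le hq
      have h1 : t.choose p ≥ 1 := Nat.choose_pos (by omega)
      have h2 : (t + 1).choose (1 + p) = t.choose p + t.choose (1 + p) := by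
        rw [Nat.add_comm 1 p, Nat.choose_succ_succ]
      omega

/-- Lifting a shattered set from the restricted family to the original one,
adding the last point. -/
lemma aux_lift (q n k : ℕ) (hn : 0 < n) (R : Finset (Fin (k + 1) → Fin n))
    (L : Finset (Fin n)) (hL : L.card = q)
    (T : Finset (Fin k → Fin n))
    (hT : ∀ g ∈ T, ∀ b ∈ L, Fin.snoc g b ∈ R)
    (S : Finset (Fin k))
    (hS : Shatters (T : Set (Fin k → Fin n)) S Finset.univ q) :
    Shatters (R : Set (Fin (k + 1) → Fin n))
      (insert (Fin.last k) (S.image Fin.castSucc)) Finset.univ q := by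
  obtain ⟨c, -, hdist, hcov⟩ := hS
  set l : Fin q → Fin n := fun i => (L.orderIsoOfFin hL i : Fin n) with hl
  have hlmem : ∀ i, l i ∈ L := fun i => (L.orderIsoOfFin hL i).2
  have hlinj : Function.Injective l := fun i j hij => by
    have := (L.orderIsoOfFin hL).injective (Subtype.ext hij)
    exact this
  refine ⟨fun i => Fin.snoc (c i) (l i), by simp, ?_, ?_⟩
  · intro x hx i j hij
    rcases Finset.mem_insert.1 hx with rfl | hx
    · simpa [Fin.snoc_last] using fun h => hij (hlinj h)
    · obtain ⟨y, hy, rfl⟩ := Finset.mem_image.1 hx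
      simpa [Fin.snoc_castSucc] using hdist y hy i j hij
  · intro h
    obtain ⟨g, hg, hmatch⟩ := hcov (fun y => h (Fin.castSucc y))
    have hgT : g ∈ T := by simpa using hg
    refine ⟨Fin.snoc g (l (h (Fin.last k))), ?_, ?_⟩
    · simpa using hT g hgT _ (hlmem _)
    · intro x hx
      rcases Finset.mem_insert.1 hx with rfl | hx
      · simp [Fin.snoc_last]
      · obtain ⟨y, hy, rfl⟩ := Finset.mem_image.1 hx
        simpa [Fin.snoc_castSucc] using hmatch y hy

theorem stmt1 (q n m d : ℕ) (hq2 : 2 ≤ q) (hqn : q ≤ n) (hm : 1 ≤ m) :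
    Fq q m n d ≤ (q - 1) * Fq q (m - 1) n d + n * n.choose q * Fq q (m - 1) n (d - 1) := by
  classical
  have hn : 0 < n := by omega
  obtain ⟨k, rfl⟩ : ∃ k, m = k + 1 := ⟨m - 1, by omega⟩
  have hmk : k + 1 - 1 = k := rfl
  rw [hmk]
  -- sSup manipulation
  apply csSup_le
  · refine ⟨0, ∅, by simp, ?_⟩
    intro S hScard hshat
    obtain ⟨c, -, -, hcov⟩ := hshat
    obtain ⟨f, hf, -⟩ := hcov (fun _ => ⟨0, by omega⟩)
    simpa using hf
  rintro r ⟨R, rfl, hR⟩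
  -- setup
  set res : (Fin (k + 1) → Fin n) → (Fin k → Fin n) :=
    fun f i => f (Fin.castSucc i) with hres
  set R' : Finset (Fin k → Fin n) := R.image res with hR'
  set Lg : (Fin k → Fin n) → Finset (Fin n) :=
    fun g => Finset.univ.filter (fun b => Fin.snoc g b ∈ R) with hLg
  set RL : Finset (Fin n) → Finset (Fin k → Fin n) :=
    fun L => R'.filter (fun g => ∀ b ∈ L, Fin.snoc g b ∈ R) with hRL
  have hsnoc : ∀ f : Fin (k + 1) → Fin n, Fin.snoc (res f) (f (Fin.last k)) = f := by
    intro f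
    exact Fin.snoc_init_self f
  -- Step A : card R = ∑ over R' of (Lg g).card
  have stepA : R.card = ∑ g ∈ R', (Lg g).card := by
    rw [hR', Finset.card_eq_sum_card_image res R]
    apply Finset.sum_congr rfl
    intro g hg
    apply Finset.card_bij (fun f _ => f (Fin.last k))
    · intro f hf
      obtain ⟨hfR, hfres⟩ := Finset.mem_filter.1 hf
      simp only [hLg, Finset.mem_filter, Finset.mem_univ, true_and]
      rw [← hfres, hsnoc f]; exact hfR
    · intro f₁ hf₁ f₂ hf₂ heq
      obtain ⟨-, h1⟩ := Finset.mem_filter.1 hf₁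
      obtain ⟨-, h2⟩ := Finset.mem_filter.1 hf₂
      rw [← hsnoc f₁, ← hsnoc f₂, h1, h2, heq]
    · intro b hb
      simp only [hLg, Finset.mem_filter, Finset.mem_univ, true_and] at hb
      refine ⟨Fin.snoc g b, ?_, by simp⟩
      refine Finset.mem_filter.2 ⟨hb, ?_⟩
      funext i
      simp [hres, Fin.snoc_castSucc]
  -- no-shatter for R'
  have hR'ns : ∀ S : Finset (Fin k), S.card = d + 1 →
      ¬ Shatters (R' : Set (Fin k → Fin n)) S Finset.univ q := by
    intro S hScard hshat
    obtain ⟨c, -, hdist, hcov⟩ := hshat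
    apply hR (S.image Fin.castSucc)
    · rw [Finset.card_image_of_injective _ (Fin.castSucc_injective k), hScard]
    refine ⟨fun i => Fin.snoc (c i) ⟨0, hn⟩, by simp, ?_, ?_⟩
    · intro x hx i j hij
      obtain ⟨y, hy, rfl⟩ := Finset.mem_image.1 hx
      simpa [Fin.snoc_castSucc] using hdist y hy i j hij
    · intro h
      obtain ⟨g, hg, hmatch⟩ := hcov (fun y => h (Fin.castSucc y))
      have hgR' : g ∈ R' := by simpa using hg
      obtain ⟨f, hfR, hfres⟩ := Finset.mem_image.1 hgR'
      refine ⟨f, by simpa using hfR, ?_⟩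
      intro x hx
      obtain ⟨y, hy, rfl⟩ := Finset.mem_image.1 hx
      have : f (Fin.castSucc y) = g y := by rw [← hfres]
      rw [this]
      simpa [Fin.snoc_castSucc] using hmatch y hy
  have hR'le : R'.card ≤ Fq q k n d := aux_le_Fq q k n d R' hR'ns
  -- each RL L bounded
  have hRLle : ∀ L ∈ Finset.univ.powersetCard q, (RL L).card ≤ Fq q k n (d - 1) := by
    intro L hLmem
    obtain ⟨-, hLcard⟩ := Finset.mem_powersetCard.1 hLmem
    have hTlift := aux_lift q n k hn R L hLcard (RL L)
      (fun g hg => (Finset.mem_filter.1 hg).2)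
    match d with
    | 0 =>
      -- RL L must be empty
      rcases Finset.eq_empty_or_nonempty (RL L) with he | ⟨g, hg⟩
      · simp [he]
      · exfalso
        have hshat : Shatters ((RL L : Finset _) : Set (Fin k → Fin n)) ∅ Finset.univ q :=
          ⟨fun _ _ => ⟨0, hn⟩, by simp, by simp, fun h => ⟨g, by simpa using hg, by simp⟩⟩
        have := hTlift ∅ hshat
        apply hR (insert (Fin.last k) ((∅ : Finset (Fin k)).image Fin.castSucc)) (by simp) this
    | e + 1 =>
      apply aux_le_Fq
      intro S hScard hshat
      have := hTlift S hshat
      apply hR (insert (Fin.last k) (S.image Fin.castSucc)) ?_ this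
      have hnm : Fin.last k ∉ S.image Fin.castSucc := by
        intro hmem
        obtain ⟨y, -, hy⟩ := Finset.mem_image.1 hmem
        exact absurd hy (Fin.castSucc_lt_last y).ne
      rw [Finset.card_insert_of_notMem hnm,
        Finset.card_image_of_injective _ (Fin.castSucc_injective k)]
      omega
  -- Step E counting with q-subsets
  have stepE : ∀ g, Nat.choose (Lg g).card q =
      ((Finset.univ.powersetCard q).filter (fun L => L ⊆ Lg g)).card := by
    intro g
    have : (Finset.univ.powersetCard q).filter (fun L => L ⊆ Lg g)
        = (Lg g).powersetCard q := by
      ext L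
      simp only [Finset.mem_filter, Finset.mem_powersetCard, Finset.subset_univ, true_and]
      tauto
    rw [this, Finset.card_powersetCard]
  have swap : ∑ g ∈ R', Nat.choose (Lg g).card q
      = ∑ L ∈ Finset.univ.powersetCard q, (RL L).card := by
    have h1 : ∀ g, Nat.choose (Lg g).card q
        = ∑ L ∈ Finset.univ.powersetCard q, if L ⊆ Lg g then 1 else 0 := by
      intro g; rw [stepE g, Finset.card_filter]
    calc ∑ g ∈ R', Nat.choose (Lg g).card q
        = ∑ g ∈ R', ∑ L ∈ Finset.univ.powersetCard q, if L ⊆ Lg g then 1 else 0 := by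
          exact Finset.sum_congr rfl (fun g _ => h1 g)
      _ = ∑ L ∈ Finset.univ.powersetCard q, ∑ g ∈ R', if L ⊆ Lg g then 1 else 0 :=
          Finset.sum_comm
      _ = ∑ L ∈ Finset.univ.powersetCard q, (RL L).card := by
          apply Finset.sum_congr rfl
          intro L hL
          rw [← Finset.card_filter]
          congr 1
          apply Finset.filter_congr
          intro g hg
          simp only [hLg, Finset.subset_iff, Finset.mem_filter, Finset.mem_univ, true_and]
  -- put everything together
  calc R.card = ∑ g ∈ R', (Lg g).card := stepA
    _ ≤ ∑ g ∈ R', (min (Lg g).card (q - 1) + ((Lg g).card - (q - 1))) := by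
        apply Finset.sum_le_sum; intro g _; omega
    _ = ∑ g ∈ R', min (Lg g).card (q - 1) + ∑ g ∈ R', ((Lg g).card - (q - 1)) :=
        Finset.sum_add_distrib
    _ ≤ (q - 1) * Fq q k n d + n * n.choose q * Fq q k n (d - 1) := by
        gcongr ?_ + ?_
        · calc ∑ g ∈ R', min (Lg g).card (q - 1)
              ≤ ∑ _g ∈ R', (q - 1) := Finset.sum_le_sum (fun g _ => min_le_right _ _)
            _ = R'.card * (q - 1) := by rw [Finset.sum_const, smul_eq_mul]
            _ = (q - 1) * R'.card := Nat.mul_comm _ _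
            _ ≤ (q - 1) * Fq q k n d := Nat.mul_le_mul_left _ hR'le
        · calc ∑ g ∈ R', ((Lg g).card - (q - 1))
              ≤ ∑ g ∈ R', Nat.choose (Lg g).card q :=
                Finset.sum_le_sum (fun g _ => aux_choose_ge _ q (by omega))
            _ = ∑ L ∈ Finset.univ.powersetCard q, (RL L).card := swap
            _ ≤ ∑ _L ∈ Finset.univ.powersetCard q, Fq q k n (d - 1) :=
                Finset.sum_le_sum hRLle
            _ = n.choose q * Fq q k n (d - 1) := by
                rw [Finset.sum_const, smul_eq_mul, Finset.card_powersetCard,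
                  Finset.card_univ, Fintype.card_fin]
            _ ≤ n * n.choose q * Fq q k n (d - 1) := by
                have : 1 ≤ n := hn
                nlinarith [Nat.zero_le (n.choose q * Fq q k n (d - 1))]
end

section
/- Suppose a subset S of a finite set U with |S| = s is (L, q)-shattered by a family R of functions from U to V, where L ⊆ V. Then there exist a q-element subset L' ⊆ L and a subset S' ⊆ S with |S'| ≥ s / C(|L|, q) such that S' is (L', q)-shattered by R; in particular, every function from S' to L' occurs as the restriction of some element of R. -/
theorem stmt3 {U V : Type*} [DecidableEq V]
    (R : Set (U → V)) (S : Finset U) (L : Finset V) (q s : ℕ)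
    (hq2 : 2 ≤ q) (hqL : q ≤ L.card) (hS : S.card = s)
    (hshat : Shatters R S L q) :
    ∃ L' ⊆ L, L'.card = q ∧ ∃ S' ⊆ S,
      (s : ℝ) / (L.card.choose q) ≤ (S'.card : ℝ) ∧
      Shatters R S' L' q ∧
      ∀ g : U → V, (∀ x ∈ S', g x ∈ L') → ∃ f ∈ R, ∀ x ∈ S', f x = g x := by
  classical
  obtain ⟨c, hcL, hcne, hcext⟩ := hshat
  set C : ℕ := L.card.choose q with hC
  have hCpos : 0 < C := Nat.choose_pos hqL
  set F : U → Finset V := fun x => Finset.image (fun i => c i x) Finset.univ with hF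
  have hFmem : ∀ x ∈ S, F x ∈ L.powersetCard q := by
    intro x hx
    rw [Finset.mem_powersetCard]
    refine ⟨fun v hv => ?_, ?_⟩
    · simp only [hF, Finset.mem_image, Finset.mem_univ] at hv
      obtain ⟨i, _, rfl⟩ := hv
      exact hcL i x hx
    · rw [hF]
      rw [Finset.card_image_of_injective _ (fun i j hij => by
        by_contra hne
        exact hcne x hx i j hne hij)]
      simp
  have hcardP : (L.powersetCard q).card = C := by
    rw [Finset.card_powersetCard, hC]
  have hPne : (L.powersetCard q).Nonempty := by
    rw [← Finset.card_pos, hcardP]; exact hCpos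
  have hpig : ∃ y ∈ L.powersetCard q, (s : ℝ) / C ≤ ((S.filter (fun x => F x = y)).card : ℝ) := by
    apply Finset.exists_le_card_fiber_of_nsmul_le_card_of_maps_to hFmem hPne
    rw [hcardP, hS, nsmul_eq_mul]
    rw [mul_div_cancel₀]
    exact_mod_cast hCpos.ne'
  obtain ⟨L', hL'mem, hL'card⟩ := hpig
  rw [Finset.mem_powersetCard] at hL'mem
  set S' := S.filter (fun x => F x = L') with hS'
  have hS'sub : S' ⊆ S := Finset.filter_subset _ _
  have hFx : ∀ x ∈ S', F x = L' := fun x hx => (Finset.mem_filter.mp hx).2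
  have hcL' : ∀ i, ∀ x ∈ S', c i x ∈ L' := by
    intro i x hx
    rw [← hFx x hx, hF]
    exact Finset.mem_image.mpr ⟨i, Finset.mem_univ i, rfl⟩
  refine ⟨L', hL'mem.1, hL'mem.2, S', hS'sub, hL'card, ?_, ?_⟩
  · refine ⟨c, hcL', fun x hx => hcne x (hS'sub hx), fun h => ?_⟩
    obtain ⟨f, hf, hfx⟩ := hcext h
    exact ⟨f, hf, fun x hx => hfx x (hS'sub hx)⟩
  · intro g hg
    have hi : ∀ x ∈ S', ∃ i : Fin q, c i x = g x := by
      intro x hx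
      have : g x ∈ F x := by rw [hFx x hx]; exact hg x hx
      simp only [hF, Finset.mem_image, Finset.mem_univ, true_and] at this
      exact this
    have hq0 : 0 < q := by omega
    set h : U → Fin q := fun x =>
      if hx : ∃ i : Fin q, c i x = g x then hx.choose else ⟨0, hq0⟩ with hh
    obtain ⟨f, hf, hfx⟩ := hcext h
    refine ⟨f, hf, fun x hx => ?_⟩
    rw [hfx x (hS'sub hx), hh]
    simp only
    rw [dif_pos (hi x hx)]
    exact (hi x hx).choose_spec
end

section
/- Let I' be a uniformly random element of [k]^ℓ, and define P(I) = max_{i ∈ [k]} |{j ∈ [ℓ] : I_j = i}|. Then E[P(I')] ≤ ℓ/k + sqrt(kπℓ) + k·2^{-ℓ/k} / ln 2. -/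
lemma exp_quad {l : ℝ} (h0 : 0 ≤ l) (h1 : l ≤ 1) : Real.exp l ≤ 1 + l + l ^ 2 := by
  have hb := Real.exp_bound (x := l) (by rw [abs_of_nonneg h0]; exact h1) (n := 3) (by norm_num)
  rw [abs_of_nonneg h0] at hb
  have h2 : ∑ m ∈ Finset.range 3, l ^ m / (m.factorial : ℝ) = 1 + l + l ^ 2 / 2 := by
    simp [Finset.sum_range_succ, Nat.factorial]
  rw [h2] at hb
  norm_num [Nat.factorial] at hb
  have h3 : l ^ 3 ≤ l ^ 2 := pow_le_pow_of_le_one h0 h1 (by norm_num)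
  have := abs_le.mp hb
  nlinarith [this.2]

lemma key_s6 (k ℓ : ℕ) (hk : 1 ≤ k) (lam : ℝ) (h0 : 0 < lam) (h1 : lam ≤ 1) :
    (∑ I : Fin ℓ → Fin k,
        (((Finset.univ.sup fun i : Fin k =>
          (Finset.univ.filter fun j : Fin ℓ => I j = i).card) : ℕ) : ℝ)) /
        (k : ℝ) ^ ℓ ≤
      (ℓ : ℝ) / k + Real.log k / lam + lam * ℓ / k := by
  have hkR : (0:ℝ) < k := by exact_mod_cast hk
  have hN : (0:ℝ) < (k:ℝ) ^ ℓ := pow_pos hkR ℓ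
  set E := Real.exp lam with hE
  have hE1 : (1:ℝ) ≤ E := Real.one_le_exp h0.le
  have hbase : (0:ℝ) < (k:ℝ) - 1 + E := by
    have : (1:ℝ) ≤ (k:ℝ) := by exact_mod_cast hk
    linarith
  have hpow : (0:ℝ) < ((k:ℝ) - 1 + E) ^ ℓ := pow_pos hbase ℓ
  set x : (Fin ℓ → Fin k) → ℝ := fun I => ∑ i : Fin k,
    Real.exp (lam * ((Finset.univ.filter fun j : Fin ℓ => I j = i).card : ℝ)) with hx
  have hxpos : ∀ I, 0 < x I := by
    intro I
    apply Finset.sum_pos (fun i _ => Real.exp_pos _)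
    exact Finset.univ_nonempty_iff.mpr ⟨⟨0, hk⟩⟩
  have hxsum : ∑ I : Fin ℓ → Fin k, x I = (k : ℝ) * ((k:ℝ) - 1 + E) ^ ℓ := by
    rw [hx, Finset.sum_comm]
    have hi : ∀ i : Fin k, (∑ I : Fin ℓ → Fin k,
        Real.exp (lam * ((Finset.univ.filter fun j : Fin ℓ => I j = i).card : ℝ)))
        = ((k:ℝ) - 1 + E) ^ ℓ := by
      intro i
      have hterm : ∀ I : Fin ℓ → Fin k,
          Real.exp (lam * ((Finset.univ.filter fun j : Fin ℓ => I j = i).card : ℝ))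
          = ∏ j : Fin ℓ, (if I j = i then E else 1) := by
        intro I
        rw [Finset.card_filter]
        push_cast
        rw [Finset.mul_sum, Real.exp_sum]
        refine Finset.prod_congr rfl fun j _ => ?_
        split_ifs <;> simp [hE]
      simp only [hterm]
      have hps := Finset.prod_univ_sum (fun _ : Fin ℓ => (Finset.univ : Finset (Fin k)))
        (fun _ v => if v = i then E else 1)
      rw [Fintype.piFinset_univ] at hps
      rw [← hps]
      have hcol : ∑ v : Fin k, (if v = i then E else 1) = (k:ℝ) - 1 + E := by
        have hv : ∀ v : Fin k, (if v = i then E else 1) = (if v = i then E - 1 else 0) + 1 := by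
          intro v; split_ifs <;> ring
        simp only [hv, Finset.sum_add_distrib, Finset.sum_ite_eq' Finset.univ i
          (fun _ => E - 1), Finset.mem_univ, if_true, Finset.sum_const, Finset.card_univ,
          Fintype.card_fin, nsmul_eq_mul, mul_one]
        ring
      simp only [hcol, Finset.prod_const, Finset.card_univ, Fintype.card_fin]
    simp only [hi]
    rw [Finset.sum_const, Finset.card_univ, Fintype.card_fin, nsmul_eq_mul]
  have hapos : (0:ℝ) < (k : ℝ) * ((k:ℝ) - 1 + E) ^ ℓ / (k:ℝ) ^ ℓ :=
    div_pos (mul_pos hkR hpow) hN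
  set a : ℝ := (k : ℝ) * ((k:ℝ) - 1 + E) ^ ℓ / (k:ℝ) ^ ℓ with ha
  have hpt : ∀ I : Fin ℓ → Fin k,
      (((Finset.univ.sup fun i : Fin k =>
        (Finset.univ.filter fun j : Fin ℓ => I j = i).card) : ℕ) : ℝ)
      ≤ Real.log (x I) / lam := by
    intro I
    obtain ⟨i0, -, hi0⟩ := Finset.exists_mem_eq_sup (Finset.univ : Finset (Fin k))
      (Finset.univ_nonempty_iff.mpr ⟨⟨0, hk⟩⟩)
      (fun i => (Finset.univ.filter fun j : Fin ℓ => I j = i).card)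
    rw [hi0, le_div_iff₀ h0, mul_comm]
    refine (Real.le_log_iff_exp_le (hxpos I)).mpr ?_
    exact Finset.single_le_sum (f := fun i : Fin k =>
      Real.exp (lam * ((Finset.univ.filter fun j : Fin ℓ => I j = i).card : ℝ)))
      (fun i _ => (Real.exp_pos _).le) (Finset.mem_univ i0)
  have htan : ∀ I : Fin ℓ → Fin k, Real.log (x I) ≤ x I / a + (Real.log a - 1) := by
    intro I
    have h := Real.log_le_sub_one_of_pos (show 0 < x I / a from div_pos (hxpos I) hapos)
    rw [Real.log_div (hxpos I).ne' hapos.ne'] at h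
    linarith
  have hsumlog : ∑ I : Fin ℓ → Fin k, Real.log (x I) ≤ (k:ℝ)^ℓ * Real.log a := by
    calc ∑ I : Fin ℓ → Fin k, Real.log (x I)
        ≤ ∑ I : Fin ℓ → Fin k, (x I / a + (Real.log a - 1)) :=
          Finset.sum_le_sum fun I _ => htan I
      _ = (∑ I : Fin ℓ → Fin k, x I) / a + (k:ℝ)^ℓ * (Real.log a - 1) := by
          rw [Finset.sum_add_distrib, ← Finset.sum_div, Finset.sum_const, Finset.card_univ,
            Fintype.card_fun, Fintype.card_fin, Fintype.card_fin, nsmul_eq_mul]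
          push_cast
          ring
      _ = (k:ℝ)^ℓ * Real.log a := by
          rw [hxsum, ha]
          field_simp
          ring
  have hmain : (∑ I : Fin ℓ → Fin k,
      (((Finset.univ.sup fun i : Fin k =>
        (Finset.univ.filter fun j : Fin ℓ => I j = i).card) : ℕ) : ℝ)) / (k:ℝ)^ℓ
      ≤ Real.log a / lam := by
    have h4 : (∑ I : Fin ℓ → Fin k,
        (((Finset.univ.sup fun i : Fin k =>
          (Finset.univ.filter fun j : Fin ℓ => I j = i).card) : ℕ) : ℝ))
        ≤ (k:ℝ)^ℓ * Real.log a / lam := by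
      calc (∑ I : Fin ℓ → Fin k, _) ≤ ∑ I : Fin ℓ → Fin k, Real.log (x I) / lam :=
            Finset.sum_le_sum fun I _ => hpt I
        _ = (∑ I : Fin ℓ → Fin k, Real.log (x I)) / lam := by rw [Finset.sum_div]
        _ ≤ (k:ℝ)^ℓ * Real.log a / lam := by
            exact div_le_div_of_nonneg_right hsumlog h0.le |>.trans_eq rfl
    have h5 : (k:ℝ)^ℓ * Real.log a / lam / (k:ℝ)^ℓ = Real.log a / lam := by
      field_simp
    calc _ ≤ ((k:ℝ)^ℓ * Real.log a / lam) / (k:ℝ)^ℓ :=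
          div_le_div_of_nonneg_right h4 hN.le
      _ = Real.log a / lam := h5
  have hloga : Real.log a ≤ Real.log k + ℓ * (lam + lam^2) / k := by
    rw [ha, Real.log_div (mul_pos hkR hpow).ne' hN.ne',
      Real.log_mul hkR.ne' hpow.ne', Real.log_pow, Real.log_pow]
    have h5 : Real.log ((k:ℝ)-1+E) - Real.log k ≤ (E-1)/k := by
      rw [← Real.log_div hbase.ne' hkR.ne']
      have hle := Real.log_le_sub_one_of_pos (show 0 < ((k:ℝ)-1+E)/k from div_pos hbase hkR)
      have heq : ((k:ℝ)-1+E)/k - 1 = (E-1)/k := by field_simp; ring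
      linarith
    have h6 : E - 1 ≤ lam + lam^2 := by
      have := exp_quad h0.le h1
      rw [← hE] at this
      linarith
    have h7 : (ℓ:ℝ) * (Real.log ((k:ℝ)-1+E) - Real.log k) ≤ ℓ * ((lam+lam^2)/k) := by
      apply mul_le_mul_of_nonneg_left _ (Nat.cast_nonneg ℓ)
      exact h5.trans (div_le_div_of_nonneg_right h6 hkR.le)
    have h8 : (ℓ:ℝ) * ((lam+lam^2)/k) = ℓ*(lam+lam^2)/k := by ring
    nlinarith [h7]
  calc _ ≤ Real.log a / lam := hmain
    _ ≤ (Real.log k + ℓ * (lam + lam^2) / k) / lam :=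
        div_le_div_of_nonneg_right hloga h0.le
    _ = (ℓ : ℝ) / k + Real.log k / lam + lam * ℓ / k := by
        field_simp
        ring


lemma caseB_arith (k ℓ : ℕ) (hk2 : 2 ≤ k) (hℓ : 1 ≤ ℓ) (hB : (ℓ:ℝ)/k ≤ Real.log k) :
    2 * Real.log k ≤ Real.sqrt (k * Real.pi * ℓ) + k * (2:ℝ) ^ (-(ℓ:ℝ)/k) / Real.log 2 := by
  have hkR : (0:ℝ) < k := by positivity
  have hk1 : (1:ℝ) ≤ k := by exact_mod_cast hk2.trans' (by norm_num)
  have hlR : (1:ℝ) ≤ ℓ := by exact_mod_cast hℓ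
  set t : ℝ := (k:ℝ) ^ (4⁻¹ : ℝ) with hT
  have ht1 : 1 ≤ t := by
    have := Real.rpow_le_rpow_of_exponent_le hk1 (show (0:ℝ) ≤ 4⁻¹ by norm_num)
    rwa [Real.rpow_zero] at this
  have htpos : 0 < t := lt_of_lt_of_le one_pos ht1
  have hlogt : Real.log k = 4 * Real.log t := by
    rw [hT, Real.log_rpow hkR]; ring
  have hlt : Real.log t ≤ t - 1 := Real.log_le_sub_one_of_pos htpos
  have hs1 : Real.sqrt ((k:ℝ) * Real.pi) ≤ Real.sqrt ((k:ℝ) * Real.pi * ℓ) := by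
    apply Real.sqrt_le_sqrt
    calc (k:ℝ) * Real.pi = (k:ℝ) * Real.pi * 1 := by ring
      _ ≤ (k:ℝ) * Real.pi * ℓ := by
          apply mul_le_mul_of_nonneg_left hlR (by positivity)
  have hsqk : Real.sqrt (k:ℝ) = t ^ 2 := by
    rw [Real.sqrt_eq_rpow, hT, ← Real.rpow_natCast ((k:ℝ) ^ (4⁻¹:ℝ)) 2,
      ← Real.rpow_mul hkR.le]
    norm_num
  have hs2 : (1.77:ℝ) * t ^ 2 ≤ Real.sqrt ((k:ℝ) * Real.pi) := by
    rw [Real.sqrt_mul (le_of_lt hkR), hsqk]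
    have hpi : (1.77:ℝ) ≤ Real.sqrt Real.pi := by
      rw [show (1.77:ℝ) = Real.sqrt (1.77^2) from (Real.sqrt_sq (by norm_num)).symm]
      apply Real.sqrt_le_sqrt
      nlinarith [Real.pi_gt_d6]
    nlinarith [sq_nonneg t]
  have hlog2 : (0:ℝ) < Real.log 2 := Real.log_pos (by norm_num)
  have h2a : (2:ℝ) ^ (-Real.log k) ≤ (2:ℝ) ^ (-(ℓ:ℝ)/k) := by
    apply Real.rpow_le_rpow_of_exponent_le one_le_two
    rw [neg_div]
    linarith
  have h2b : (2:ℝ) ^ (-Real.log k) = (k:ℝ) ^ (-Real.log 2) := by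
    rw [Real.rpow_def_of_pos (by norm_num : (0:ℝ) < 2), Real.rpow_def_of_pos hkR]
    congr 1; ring
  have h2c : (k:ℝ) * (k:ℝ) ^ (-Real.log 2) = (k:ℝ) ^ (1 - Real.log 2) := by
    rw [sub_eq_add_neg, Real.rpow_add hkR, Real.rpow_one]
  have h2d : t ≤ (k:ℝ) ^ (1 - Real.log 2) := by
    rw [hT]
    apply Real.rpow_le_rpow_of_exponent_le hk1
    have := Real.log_two_lt_d9
    norm_num
    linarith
  have h2e : t ≤ (k:ℝ) * (2:ℝ) ^ (-(ℓ:ℝ)/k) / Real.log 2 := by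
    rw [le_div_iff₀ hlog2]
    have hl21 : Real.log 2 ≤ 1 := by
      have := Real.log_le_sub_one_of_pos (show (0:ℝ) < 2 by norm_num); linarith
    calc t * Real.log 2 ≤ t * 1 := by nlinarith
      _ = t := mul_one t
      _ ≤ (k:ℝ) ^ (1 - Real.log 2) := h2d
      _ = (k:ℝ) * (2:ℝ) ^ (-Real.log k) := by rw [h2b, h2c]
      _ ≤ (k:ℝ) * (2:ℝ) ^ (-(ℓ:ℝ)/k) := by
          apply mul_le_mul_of_nonneg_left h2a hkR.le
  nlinarith [sq_nonneg (t - 2)]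

lemma caseA_arith (k ℓ : ℕ) (hk2 : 2 ≤ k) (hℓ : 1 ≤ ℓ) :
    Real.log k / Real.sqrt ((k:ℝ) * Real.log k / ℓ) +
      Real.sqrt ((k:ℝ) * Real.log k / ℓ) * ℓ / k ≤ Real.sqrt ((k:ℝ) * Real.pi * ℓ) := by
  have hkR : (0:ℝ) < k := by positivity
  have hlogk : 0 < Real.log k := Real.log_pos (by exact_mod_cast hk2)
  have hlRpos : (0:ℝ) < ℓ := by exact_mod_cast hℓ
  set lam := Real.sqrt ((k:ℝ) * Real.log k / ℓ) with hL
  have hlampos : 0 < lam := Real.sqrt_pos.mpr (by positivity)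
  have hsq : lam ^ 2 = (k:ℝ) * Real.log k / ℓ := Real.sq_sqrt (by positivity)
  have hnn : 0 ≤ Real.log k / lam + lam * ℓ / k := by positivity
  rw [← Real.sqrt_sq hnn]
  apply Real.sqrt_le_sqrt
  have hexpand : (Real.log k / lam + lam * ℓ / k) ^ 2 = 4 * (ℓ * Real.log k / k) := by
    have h1 : (Real.log k / lam + lam * ℓ / k) ^ 2
        = (Real.log k)^2 / lam^2 + 2 * Real.log k * (ℓ / k) + lam^2 * (ℓ/k)^2 := by
      field_simp
      ring
    rw [h1, hsq]
    field_simp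
    ring
  rw [hexpand]
  have hlk : Real.log k ≤ (k:ℝ) - 1 := by
    have := Real.log_le_sub_one_of_pos hkR; linarith
  have key2 : 4*((k:ℝ)-1) ≤ Real.pi * (k:ℝ)^2 := by
    nlinarith [Real.pi_gt_d6, sq_nonneg ((k:ℝ)-1), hkR.le, sq_nonneg (k:ℝ)]
  have h9 : 4 * ((ℓ:ℝ) * Real.log k / k) = 4 * ℓ * Real.log k / k := by ring
  rw [h9, div_le_iff₀ hkR]
  nlinarith [mul_le_mul_of_nonneg_left key2 hlRpos.le,
    mul_le_mul_of_nonneg_left hlk (show (0:ℝ) ≤ 4 * ℓ by positivity)]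

theorem stmt6 (k ℓ : ℕ) (hk : 1 ≤ k) (hℓ : 1 ≤ ℓ) :
    (∑ I : Fin ℓ → Fin k,
        (((Finset.univ.sup fun i : Fin k =>
          (Finset.univ.filter fun j : Fin ℓ => I j = i).card) : ℕ) : ℝ)) /
        (k : ℝ) ^ ℓ ≤
      (ℓ : ℝ) / k + Real.sqrt (k * Real.pi * ℓ) +
        k * (2 : ℝ) ^ (-(ℓ : ℝ) / k) / Real.log 2 := by
  have hkR : (0:ℝ) < k := by positivity
  have h3rd : 0 ≤ (k:ℝ) * (2 : ℝ) ^ (-(ℓ : ℝ) / k) / Real.log 2 :=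
    div_nonneg (by positivity) (Real.log_nonneg one_le_two)
  have hsqrtnn : 0 ≤ Real.sqrt ((k:ℝ) * Real.pi * ℓ) := Real.sqrt_nonneg _
  rcases eq_or_lt_of_le hk with hk1 | hk2
  · -- k = 1
    subst hk1
    have hsup : ∀ I : Fin ℓ → Fin 1, (Finset.univ.sup fun i : Fin 1 =>
        (Finset.univ.filter fun j : Fin ℓ => I j = i).card) = ℓ := by
      intro I
      have hIj : ∀ (j : Fin ℓ) (i : Fin 1), I j = i := fun j i => Subsingleton.elim _ _
      simp [Finset.filter_true_of_mem fun j _ => hIj j _, Finset.card_univ]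
    simp only [hsup, Finset.sum_const, Finset.card_univ, Fintype.card_fun,
      Fintype.card_fin, one_pow, nsmul_eq_mul, Nat.cast_one, mul_one, one_mul, div_one]
    push_cast
    have hA0 : 0 ≤ Real.sqrt (Real.pi * ℓ) := Real.sqrt_nonneg _
    have hB0 : 0 ≤ (2:ℝ) ^ (-(ℓ:ℝ)) / Real.log 2 :=
      div_nonneg (by positivity) (Real.log_nonneg one_le_two)
    linarith
  · -- 2 ≤ k
    have hk2' : 2 ≤ k := hk2
    rcases le_total ((ℓ:ℝ)/k) (Real.log k) with hB | hA
    · have hkey := key_s6 k ℓ hk 1 one_pos le_rfl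
      have harith := caseB_arith k ℓ hk2' hℓ hB
      have : Real.log (k:ℝ) / 1 + 1 * (ℓ:ℝ) / k = Real.log k + ℓ/k := by ring
      linarith [hkey, harith, hB]
    · have hlogk : 0 < Real.log k := Real.log_pos (by exact_mod_cast hk2')
      have hlRpos : (0:ℝ) < ℓ := by exact_mod_cast hℓ
      set lam := Real.sqrt ((k:ℝ) * Real.log k / ℓ) with hL
      have hlampos : 0 < lam := Real.sqrt_pos.mpr (by positivity)
      have hl1 : lam ≤ 1 := by
        rw [hL, show (1:ℝ) = Real.sqrt 1 from Real.sqrt_one.symm]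
        apply Real.sqrt_le_sqrt
        rw [div_le_one hlRpos]
        calc (k:ℝ) * Real.log k ≤ (k:ℝ) * ((ℓ:ℝ)/k) :=
              mul_le_mul_of_nonneg_left hA hkR.le
          _ = ℓ := by field_simp
      have hkey := key_s6 k ℓ hk lam hlampos hl1
      have harith := caseA_arith k ℓ hk2' hℓ
      rw [← hL] at harith
      linarith [hkey, harith]
end

section
/- Let {(T_1^i, ..., T_k^i) : i ∈ [ℓ]} be ℓ covering k-partitions of an m-element set M that are ε-apart, and let v^j be the perfect valuation profile generated by the j-th partition (player i values item x at 1 if x ∈ T_i^j, else 0). Then for any single allocation R of M to [k] (a partial function from M to [k]), the sum over j ∈ [ℓ] of the social welfare of R under v^j is at most (1/k + sqrt(kπ/ℓ) + k·2^{-ℓ/k}/(ℓ·ln 2))·(1+ε)·ℓm, i.e., at most that fraction of the sum ℓm of the optimal social welfares. -/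
open Finset

section stmt7aux

private lemma stmt7_countPair (k ℓ : ℕ) (j j' : Fin ℓ) (h : j ≠ j') :
    ∑ I : Fin ℓ → Fin k, (if I j = I j' then (1:ℝ) else 0) = (k:ℝ)^(ℓ-1) := by
  rw [← Equiv.sum_comp (Equiv.funSplitAt j' (Fin k)).symm]
  rw [Fintype.sum_prod_type]
  have h1 : ∀ (b : Fin k) (g : {i : Fin ℓ // i ≠ j'} → Fin k),
      (Equiv.funSplitAt j' (Fin k)).symm (b, g) j = g ⟨j, h⟩ := by
    intro b g; simp [Equiv.funSplitAt, Equiv.piSplitAt, h]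
  have h2 : ∀ (b : Fin k) (g : {i : Fin ℓ // i ≠ j'} → Fin k),
      (Equiv.funSplitAt j' (Fin k)).symm (b, g) j' = b := by
    intro b g; simp [Equiv.funSplitAt, Equiv.piSplitAt]
  calc ∑ b : Fin k, ∑ g : {i : Fin ℓ // i ≠ j'} → Fin k,
        (if (Equiv.funSplitAt j' (Fin k)).symm (b, g) j
            = (Equiv.funSplitAt j' (Fin k)).symm (b, g) j' then (1:ℝ) else 0)
      = ∑ g : {i : Fin ℓ // i ≠ j'} → Fin k, ∑ b : Fin k,
        (if g ⟨j, h⟩ = b then (1:ℝ) else 0) := by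
        rw [Finset.sum_comm]
        exact Finset.sum_congr rfl fun g _ => Finset.sum_congr rfl fun b _ => by
          rw [h1, h2]
    _ = ∑ g : {i : Fin ℓ // i ≠ j'} → Fin k, (1:ℝ) := by
        refine Finset.sum_congr rfl fun g _ => ?_
        simp
    _ = (k:ℝ)^(ℓ-1) := by
        rw [Finset.sum_const, Finset.card_univ]
        simp [Fintype.card_subtype_compl, Fintype.card_fun]

private lemma stmt7_csq (k ℓ : ℕ) (I : Fin ℓ → Fin k) :
    ∑ a : Fin k, (∑ j, if I j = a then (1:ℝ) else 0)^2
      = ∑ j : Fin ℓ, ∑ j' : Fin ℓ, (if I j = I j' then (1:ℝ) else 0) := by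
  have key : ∀ j j' : Fin ℓ, ∑ a : Fin k,
      (if I j = a then (1:ℝ) else 0) * (if I j' = a then 1 else 0)
      = if I j = I j' then 1 else 0 := by
    intro j j'
    by_cases h : I j = I j'
    · rw [h]; simp
    · simp only [h, if_false]
      refine Finset.sum_eq_zero fun a _ => ?_
      by_cases h1 : I j = a
      · have : ¬ (I j' = a) := fun h2 => h (h1.trans h2.symm)
        simp [this]
      · simp [h1]
  calc ∑ a : Fin k, (∑ j, if I j = a then (1:ℝ) else 0)^2
      = ∑ a : Fin k, ∑ j : Fin ℓ, ∑ j' : Fin ℓ,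
          (if I j = a then (1:ℝ) else 0) * (if I j' = a then 1 else 0) := by
        refine Finset.sum_congr rfl fun a _ => ?_
        rw [sq, Finset.sum_mul_sum]
    _ = ∑ j : Fin ℓ, ∑ j' : Fin ℓ, ∑ a : Fin k,
          (if I j = a then (1:ℝ) else 0) * (if I j' = a then 1 else 0) := by
        rw [Finset.sum_comm]
        exact Finset.sum_congr rfl fun j _ => Finset.sum_comm
    _ = _ := Finset.sum_congr rfl fun j _ => Finset.sum_congr rfl fun j' _ => key j j'

private lemma stmt7_sumQ (k ℓ : ℕ) (hk : 1 ≤ k) (hℓ : 1 ≤ ℓ) :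
    ∑ I : Fin ℓ → Fin k, ∑ a : Fin k,
      ((∑ j, if I j = a then (1:ℝ) else 0) - ℓ/k)^2 ≤ ℓ * (k:ℝ)^ℓ := by
  have hk0 : (0:ℝ) < k := by exact_mod_cast hk
  have kpow : (k:ℝ)^ℓ = k * (k:ℝ)^(ℓ-1) := by
    conv_lhs => rw [show ℓ = (ℓ-1)+1 from (Nat.succ_pred_eq_of_pos hℓ).symm]
    rw [pow_succ]; ring
  have sumc : ∀ I : Fin ℓ → Fin k, ∑ a : Fin k, (∑ j, if I j = a then (1:ℝ) else 0) = ℓ := by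
    intro I
    rw [Finset.sum_comm]
    simp
  have expand : ∀ I : Fin ℓ → Fin k,
      ∑ a : Fin k, ((∑ j, if I j = a then (1:ℝ) else 0) - ℓ/k)^2
      = (∑ a : Fin k, (∑ j, if I j = a then (1:ℝ) else 0)^2) - (ℓ:ℝ)^2/k := by
    intro I
    have : ∀ a : Fin k, ((∑ j, if I j = a then (1:ℝ) else 0) - ℓ/k)^2
        = (∑ j, if I j = a then (1:ℝ) else 0)^2
          - 2*(ℓ/k)*(∑ j, if I j = a then (1:ℝ) else 0) + (ℓ/k)^2 := by
      intro a; ring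
    rw [Finset.sum_congr rfl fun a _ => this a, Finset.sum_add_distrib,
      Finset.sum_sub_distrib, ← Finset.mul_sum, sumc, Finset.sum_const, Finset.card_univ,
      Fintype.card_fin]
    field_simp
    linear_combination (ℓ:ℝ)^2 * ((k:ℝ)*(k:ℝ)⁻¹ + 1) * mul_inv_cancel₀ hk0.ne'
  have count_diag : ∑ I : Fin ℓ → Fin k, ∑ j : Fin ℓ, ∑ j' : Fin ℓ,
      (if I j = I j' then (1:ℝ) else 0)
      = ℓ * ((k:ℝ)^ℓ - (k:ℝ)^(ℓ-1)) + (ℓ:ℝ)^2 * (k:ℝ)^(ℓ-1) := by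
    rw [Finset.sum_comm]
    have : ∀ j : Fin ℓ, ∑ I : Fin ℓ → Fin k, ∑ j' : Fin ℓ, (if I j = I j' then (1:ℝ) else 0)
        = ((k:ℝ)^ℓ - (k:ℝ)^(ℓ-1)) + ℓ * (k:ℝ)^(ℓ-1) := by
      intro j
      rw [Finset.sum_comm]
      have : ∀ j' : Fin ℓ, ∑ I : Fin ℓ → Fin k, (if I j = I j' then (1:ℝ) else 0)
          = if j = j' then (k:ℝ)^ℓ else (k:ℝ)^(ℓ-1) := by
        intro j'
        by_cases h : j = j'
        · subst h; simp [Finset.card_univ]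
        · rw [stmt7_countPair k ℓ j j' h]; simp [h]
      rw [Finset.sum_congr rfl fun j' _ => this j']
      have h2 : ∀ j' : Fin ℓ, (if j = j' then (k:ℝ)^ℓ else (k:ℝ)^(ℓ-1))
          = (k:ℝ)^(ℓ-1) + (if j = j' then (k:ℝ)^ℓ - (k:ℝ)^(ℓ-1) else 0) := by
        intro j'; split_ifs <;> ring
      rw [Finset.sum_congr rfl fun j' _ => h2 j', Finset.sum_add_distrib,
        Finset.sum_const, Finset.card_univ, Fintype.card_fin,
        Finset.sum_ite_eq Finset.univ j]
      simp
      ring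
    rw [Finset.sum_congr rfl fun j _ => this j, Finset.sum_const, Finset.card_univ,
      Fintype.card_fin]
    ring
  calc ∑ I : Fin ℓ → Fin k, ∑ a : Fin k, ((∑ j, if I j = a then (1:ℝ) else 0) - ℓ/k)^2
      = ∑ I : Fin ℓ → Fin k, ((∑ j : Fin ℓ, ∑ j' : Fin ℓ, (if I j = I j' then (1:ℝ) else 0)) - (ℓ:ℝ)^2/k) := by
        refine Finset.sum_congr rfl fun I _ => ?_
        rw [expand I, stmt7_csq]
    _ = (ℓ * ((k:ℝ)^ℓ - (k:ℝ)^(ℓ-1)) + (ℓ:ℝ)^2 * (k:ℝ)^(ℓ-1)) - (k:ℝ)^ℓ * ((ℓ:ℝ)^2/k) := by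
        rw [Finset.sum_sub_distrib, count_diag, Finset.sum_const, Finset.card_univ]
        simp [Fintype.card_fun]
    _ = ℓ * (k:ℝ)^ℓ - ℓ * (k:ℝ)^(ℓ-1) := by
        rw [kpow]
        field_simp
        ring
    _ ≤ ℓ * (k:ℝ)^ℓ := by
        have : (0:ℝ) ≤ ℓ * (k:ℝ)^(ℓ-1) := by positivity
        linarith

end stmt7aux

theorem stmt7 (k ℓ m : ℕ) (hk : 1 ≤ k) (hℓ : 1 ≤ ℓ) (ε : ℝ) (hε : 0 < ε)
    (T : Fin ℓ → Fin m → Fin k)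
    -- the ℓ covering k-partitions (as labelling functions) are ε-apart
    (hapart : ∀ I : Fin ℓ → Fin k,
      ((Finset.univ.filter fun x : Fin m => ∀ i, T i x = I i).card : ℝ) ≤
        ((1 : ℝ) / k) ^ ℓ * (1 + ε) * m)
    -- a single (partial) allocation of the items to the k players
    (R : Fin m → Option (Fin k)) :
    -- the total welfare of R over the ℓ generated perfect valuation profiles
    (∑ j : Fin ℓ,
        ((Finset.univ.filter fun x : Fin m => R x = some (T j x)).card : ℝ)) ≤
      ((1 : ℝ) / k + Real.sqrt (k * Real.pi / ℓ) +
        k * (2 : ℝ) ^ (-(ℓ : ℝ) / k) / (ℓ * Real.log 2)) * (1 + ε) * (ℓ * m) := by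
  have hk0 : (0:ℝ) < k := by exact_mod_cast hk
  have hℓ0 : (0:ℝ) < ℓ := by exact_mod_cast hℓ
  -- the per-label-vector quantities
  set c : (Fin ℓ → Fin k) → Fin k → ℝ := fun I a => ∑ j, if I j = a then (1:ℝ) else 0 with hc
  set Q : (Fin ℓ → Fin k) → ℝ := fun I => ∑ a : Fin k, (c I a - ℓ/k)^2 with hQ
  set f : (Fin ℓ → Fin k) → ℝ := fun I => ℓ/k + Real.sqrt (Q I) with hf
  have hQnn : ∀ I, 0 ≤ Q I := fun I => Finset.sum_nonneg fun a _ => sq_nonneg _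
  have hfnn : ∀ I, 0 ≤ f I := fun I => add_nonneg (by positivity) (Real.sqrt_nonneg _)
  -- step 1: swap the sum
  have step1 : (∑ j : Fin ℓ,
        ((Finset.univ.filter fun x : Fin m => R x = some (T j x)).card : ℝ))
      = ∑ x : Fin m, ∑ j : Fin ℓ, (if R x = some (T j x) then (1:ℝ) else 0) := by
    rw [Finset.sum_comm]
    refine Finset.sum_congr rfl fun j _ => ?_
    rw [Finset.card_filter]
    push_cast
    rfl
  -- step 2: pointwise bound
  have step2 : ∀ x : Fin m,
      (∑ j : Fin ℓ, if R x = some (T j x) then (1:ℝ) else 0) ≤ f (fun j => T j x) := by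
    intro x
    cases hR : R x with
    | none => simp [hR, hfnn]
    | some a =>
      have : (∑ j : Fin ℓ, if some a = some (T j x) then (1:ℝ) else 0)
          = c (fun j => T j x) a := by
        refine Finset.sum_congr rfl fun j _ => ?_
        simp [eq_comm]
      rw [this, hf]
      have h1 : c (fun j => T j x) a - ℓ/k ≤ Real.sqrt (Q (fun j => T j x)) := by
        calc c (fun j => T j x) a - ℓ/k ≤ |c (fun j => T j x) a - ℓ/k| := le_abs_self _
          _ = Real.sqrt ((c (fun j => T j x) a - ℓ/k)^2) := (Real.sqrt_sq_eq_abs _).symm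
          _ ≤ Real.sqrt (Q (fun j => T j x)) := by
              apply Real.sqrt_le_sqrt
              exact Finset.single_le_sum
                (f := fun b : Fin k => (c (fun j => T j x) b - ℓ/k)^2)
                (fun b _ => sq_nonneg _) (Finset.mem_univ a)
      linarith
  -- step 3: fiberwise sum over label vectors
  have step3 : (∑ x : Fin m, f (fun j => T j x))
      = ∑ I : Fin ℓ → Fin k,
          ((Finset.univ.filter fun x : Fin m => (fun j => T j x) = I).card : ℝ) * f I := by
    rw [← Finset.sum_fiberwise Finset.univ (fun x : Fin m => fun j => T j x)
      (fun x => f (fun j => T j x))]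
    refine Finset.sum_congr rfl fun I _ => ?_
    rw [Finset.sum_congr rfl fun x hx => by
      rw [show (fun j => T j x) = I from (Finset.mem_filter.mp hx).2]]
    rw [Finset.sum_const, nsmul_eq_mul]
  -- step 4: apply hapart
  have step4 : ∀ I : Fin ℓ → Fin k,
      ((Finset.univ.filter fun x : Fin m => (fun j => T j x) = I).card : ℝ) * f I ≤
        ((1:ℝ)/k)^ℓ * (1+ε) * m * f I := by
    intro I
    apply mul_le_mul_of_nonneg_right _ (hfnn I)
    have : (Finset.univ.filter fun x : Fin m => (fun j => T j x) = I)
        = (Finset.univ.filter fun x : Fin m => ∀ i, T i x = I i) := by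
      apply Finset.filter_congr
      intro x _
      simp [funext_iff]
    rw [this]
    exact hapart I
  -- step 5: sum of f over all label vectors
  have cardfun : (Finset.univ : Finset (Fin ℓ → Fin k)).card = k^ℓ := by
    simp [Finset.card_univ, Fintype.card_fun]
  have step5 : ∑ I : Fin ℓ → Fin k, f I ≤ (k:ℝ)^ℓ * (ℓ/k) + (k:ℝ)^ℓ * Real.sqrt ℓ := by
    rw [hf]
    simp only []
    rw [Finset.sum_add_distrib, Finset.sum_const, Finset.card_univ]
    gcongr
    · simp [Fintype.card_fun]
    -- ∑ sqrt (Q I) ≤ k^ℓ * sqrt ℓ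
    have cs : (∑ I : Fin ℓ → Fin k, Real.sqrt (Q I))^2
        ≤ ((k:ℝ)^ℓ) * ∑ I : Fin ℓ → Fin k, Q I := by
      have := sq_sum_le_card_mul_sum_sq (s := (Finset.univ : Finset (Fin ℓ → Fin k)))
        (f := fun I => Real.sqrt (Q I))
      rw [cardfun] at this
      calc (∑ I : Fin ℓ → Fin k, Real.sqrt (Q I))^2
          ≤ (k^ℓ : ℕ) * ∑ I : Fin ℓ → Fin k, (Real.sqrt (Q I))^2 := by exact_mod_cast this
        _ = ((k:ℝ)^ℓ) * ∑ I : Fin ℓ → Fin k, Q I := by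
            push_cast
            congr 1
            exact Finset.sum_congr rfl fun I _ => Real.sq_sqrt (hQnn I)
    have hQsum : ∑ I : Fin ℓ → Fin k, Q I ≤ ℓ * (k:ℝ)^ℓ := stmt7_sumQ k ℓ hk hℓ
    have : (∑ I : Fin ℓ → Fin k, Real.sqrt (Q I))^2 ≤ ((k:ℝ)^ℓ * Real.sqrt ℓ)^2 := by
      calc (∑ I : Fin ℓ → Fin k, Real.sqrt (Q I))^2
          ≤ ((k:ℝ)^ℓ) * (ℓ * (k:ℝ)^ℓ) := le_trans cs (by
            apply mul_le_mul_of_nonneg_left hQsum (by positivity))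
        _ = ((k:ℝ)^ℓ * Real.sqrt ℓ)^2 := by
            rw [mul_pow, Real.sq_sqrt hℓ0.le]
            ring
    have h1 : 0 ≤ ∑ I : Fin ℓ → Fin k, Real.sqrt (Q I) :=
      Finset.sum_nonneg fun I _ => Real.sqrt_nonneg _
    have h2 : (0:ℝ) ≤ (k:ℝ)^ℓ * Real.sqrt ℓ := by positivity
    nlinarith
  -- combine
  have main : (∑ j : Fin ℓ,
        ((Finset.univ.filter fun x : Fin m => R x = some (T j x)).card : ℝ))
      ≤ (1+ε) * m * (ℓ/k + Real.sqrt ℓ) := by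
    rw [step1]
    calc ∑ x : Fin m, ∑ j : Fin ℓ, (if R x = some (T j x) then (1:ℝ) else 0)
        ≤ ∑ x : Fin m, f (fun j => T j x) :=
          Finset.sum_le_sum fun x _ => step2 x
      _ = ∑ I : Fin ℓ → Fin k,
            ((Finset.univ.filter fun x : Fin m => (fun j => T j x) = I).card : ℝ) * f I := step3
      _ ≤ ∑ I : Fin ℓ → Fin k, ((1:ℝ)/k)^ℓ * (1+ε) * m * f I :=
          Finset.sum_le_sum fun I _ => step4 I
      _ = ((1:ℝ)/k)^ℓ * (1+ε) * m * ∑ I : Fin ℓ → Fin k, f I := by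
          rw [Finset.mul_sum]
      _ ≤ ((1:ℝ)/k)^ℓ * (1+ε) * m * ((k:ℝ)^ℓ * (ℓ/k) + (k:ℝ)^ℓ * Real.sqrt ℓ) := by
          apply mul_le_mul_of_nonneg_left step5 (by positivity)
      _ = (1+ε) * m * (ℓ/k + Real.sqrt ℓ) := by
          have : ((1:ℝ)/k)^ℓ * (k:ℝ)^ℓ = 1 := by
            rw [div_pow, one_pow]
            field_simp
          field_simp
          nlinarith [this]
  -- final arithmetic
  have hπ : (1:ℝ) ≤ Real.pi := le_trans (by norm_num) Real.pi_gt_three.le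
  have ht3 : (0:ℝ) ≤ k * (2:ℝ)^(-(ℓ:ℝ)/k) / (ℓ * Real.log 2) := by
    apply div_nonneg
    · positivity
    · have := Real.log_pos (by norm_num : (1:ℝ) < 2)
      positivity
  have hsq : Real.sqrt ℓ ≤ Real.sqrt (k * Real.pi / ℓ) * ℓ := by
    have h1 : Real.sqrt (k * Real.pi / ℓ) * ℓ = Real.sqrt (k * Real.pi * ℓ) := by
      rw [show (ℓ:ℝ) = Real.sqrt ((ℓ:ℝ)^2) from (Real.sqrt_sq hℓ0.le).symm]
      rw [← Real.sqrt_mul (by positivity)]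
      congr 1
      field_simp
      ring
      exact (Real.sq_sqrt (by positivity)).symm
    rw [h1]
    apply Real.sqrt_le_sqrt
    have hk1 : (1:ℝ) ≤ k := by exact_mod_cast hk
    have hkπ : (1:ℝ) ≤ k * Real.pi := by
      calc (1:ℝ) = 1 * 1 := by norm_num
        _ ≤ k * Real.pi := mul_le_mul hk1 hπ zero_le_one (by linarith)
    nlinarith [mul_le_mul_of_nonneg_right hkπ hℓ0.le]
  have hfrac : (ℓ:ℝ)/k + Real.sqrt ℓ ≤ ((1:ℝ)/k + Real.sqrt (k * Real.pi / ℓ) +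
      k * (2:ℝ)^(-(ℓ:ℝ)/k) / (ℓ * Real.log 2)) * ℓ := by
    have : ((1:ℝ)/k + Real.sqrt (k * Real.pi / ℓ) +
        k * (2:ℝ)^(-(ℓ:ℝ)/k) / (ℓ * Real.log 2)) * ℓ
        = ℓ/k + Real.sqrt (k * Real.pi / ℓ) * ℓ
          + (k * (2:ℝ)^(-(ℓ:ℝ)/k) / (ℓ * Real.log 2)) * ℓ := by ring
    rw [this]
    have h3 : 0 ≤ (k * (2:ℝ)^(-(ℓ:ℝ)/k) / (ℓ * Real.log 2)) * ℓ :=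
      mul_nonneg ht3 hℓ0.le
    linarith [hsq]
  calc (∑ j : Fin ℓ,
        ((Finset.univ.filter fun x : Fin m => R x = some (T j x)).card : ℝ))
      ≤ (1+ε) * m * (ℓ/k + Real.sqrt ℓ) := main
    _ ≤ (1+ε) * m * (((1:ℝ)/k + Real.sqrt (k * Real.pi / ℓ) +
          k * (2:ℝ)^(-(ℓ:ℝ)/k) / (ℓ * Real.log 2)) * ℓ) := by
        apply mul_le_mul_of_nonneg_left hfrac (by positivity)
    _ = ((1:ℝ)/k + Real.sqrt (k * Real.pi / ℓ) +
          k * (2:ℝ)^(-(ℓ:ℝ)/k) / (ℓ * Real.log 2)) * (1+ε) * (ℓ * m) := by ring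
end

section
/- Let M be a finite set of items and N = [k] a set of players. Suppose valuations v_i : 2^{M_1} → ℝ≥0 on a set M_1 with max_i v_i(M_1) = 1, and let v'_i be a perfect valuation profile on a disjoint set M_2 with |M_2| = m'. Define hybrid valuations v*_i(S) = v_i(S ∩ M_1) + γ·v'_i(S ∩ M_2) with γ = 4k/(ε m'). Let OPT, OPT', OPT* be the optimal social welfares under v, v', v* respectively. Then OPT* = OPT + γ·OPT', and for any allocation S and any β ≥ 0, if v*(S) ≥ β·OPT* then v'(S) ≥ (β − ε/2)·OPT'. -/
open Finset

theorem stmt12 (k : ℕ) (hk : 1 ≤ k)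
    (Item : Type) [Fintype Item] [DecidableEq Item]
    (M₁ M₂ : Finset Item) (hdisj : Disjoint M₁ M₂)
    (m' : ℕ) (hm' : M₂.card = m') (hm'pos : 1 ≤ m')
    (ε : ℝ) (hε0 : 0 < ε) (hε1 : ε ≤ 1)
    (γ : ℝ) (hγ : γ = 4 * k / (ε * m')) (hγ1 : γ ≤ 1)
    -- the original valuations on M₁: nonnegative, normalized monotone set functions
    (v : Fin k → Finset Item → ℝ)
    (hv0 : ∀ i, v i ∅ = 0)
    (hnonneg : ∀ i S, 0 ≤ v i S)
    (hmono : ∀ i, ∀ S T : Finset Item, S ⊆ T → v i S ≤ v i T)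
    (hmax : ∃ i, v i M₁ = 1) (hmax' : ∀ i, v i M₁ ≤ 1)
    -- the perfect valuation profile on M₂ is generated by the total allocation p
    (p : Item → Fin k)
    -- valid allocations: disjoint bundles of items
    (Valid : (Fin k → Finset Item) → Prop)
    (hValid : ∀ S, Valid S ↔ (∀ i, S i ⊆ M₁ ∪ M₂) ∧
      ∀ i j, i ≠ j → Disjoint (S i) (S j))
    -- welfare under v, and under the perfect profile v'
    (wV wV' : (Fin k → Finset Item) → ℝ)
    (hwV : ∀ S, wV S = ∑ i, v i (S i ∩ M₁))
    (hwV' : ∀ S, wV' S = ∑ i, (((S i ∩ M₂).filter fun x => p x = i).card : ℝ))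
    -- the optimal social welfares under v and under the hybrid v* = v ⊕ γ v'
    (OPT OPTstar : ℝ)
    (hOPT : IsGreatest {w : ℝ | ∃ S, Valid S ∧ w = wV S} OPT)
    (hOPTstar : IsGreatest {w : ℝ | ∃ S, Valid S ∧ w = wV S + γ * wV' S} OPTstar) :
    OPTstar = OPT + γ * m' ∧
      ∀ S, Valid S → ∀ β : ℝ, 0 ≤ β →
        β * OPTstar ≤ wV S + γ * wV' S → (β - ε / 2) * m' ≤ wV' S := by
  have hkpos : (0:ℝ) < k := by exact_mod_cast hk
  have hm'posR : (0:ℝ) < m' := by exact_mod_cast hm'pos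
  have hγpos : 0 < γ := by
    rw [hγ]; positivity
  -- wV' bounds
  have hwV'nonneg : ∀ S, 0 ≤ wV' S := by
    intro S; rw [hwV']; positivity
  have hwV'le : ∀ S, Valid S → wV' S ≤ (m' : ℝ) := by
    intro S hS
    obtain ⟨hsub, hdis⟩ := (hValid S).1 hS
    rw [hwV']
    have hcast : (∑ i, (((S i ∩ M₂).filter fun x => p x = i).card : ℝ))
        = ((∑ i, ((S i ∩ M₂).filter fun x => p x = i).card : ℕ) : ℝ) := by
      push_cast; ring
    rw [hcast, ← hm']
    have := Finset.card_biUnion (s := (Finset.univ : Finset (Fin k)))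
      (t := fun i => (S i ∩ M₂).filter fun x => p x = i) (by
        intro i _ j _ hij
        exact Finset.disjoint_filter_filter
          (Finset.disjoint_of_subset_left Finset.inter_subset_left
            (Finset.disjoint_of_subset_right Finset.inter_subset_left (hdis i j hij))))
    rw [← this]
    exact_mod_cast Finset.card_le_card (by
      intro x hx
      simp only [Finset.mem_biUnion] at hx
      obtain ⟨i, _, hx⟩ := hx
      exact Finset.mem_of_mem_inter_right (Finset.mem_of_mem_filter x hx))
  -- wV bounds
  have hwVnonneg : ∀ S, 0 ≤ wV S := by
    intro S; rw [hwV]; exact Finset.sum_nonneg fun i _ => hnonneg i _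
  have hwVk : ∀ S, wV S ≤ (k : ℝ) := by
    intro S; rw [hwV]
    calc ∑ i, v i (S i ∩ M₁) ≤ ∑ _i : Fin k, (1:ℝ) :=
          Finset.sum_le_sum fun i _ =>
            le_trans (hmono i _ _ Finset.inter_subset_right) (hmax' i)
      _ = k := by simp
  have hOPTle : ∀ S, Valid S → wV S ≤ OPT := fun S hS => hOPT.2 ⟨S, hS, rfl⟩
  obtain ⟨S₀, hS₀, hOPTeq⟩ := hOPT.1
  have hOPT0 : 0 ≤ OPT := hOPTeq ▸ hwVnonneg S₀
  have hOPTk : OPT ≤ (k : ℝ) := hOPTeq ▸ hwVk S₀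
  -- the combined allocation
  set S' : Fin k → Finset Item := fun i => (S₀ i ∩ M₁) ∪ (M₂.filter fun x => p x = i)
    with hS'def
  obtain ⟨hsub₀, hdis₀⟩ := (hValid S₀).1 hS₀
  have hS'valid : Valid S' := by
    rw [hValid]
    constructor
    · intro i x hx
      simp only [hS'def, Finset.mem_union, Finset.mem_inter, Finset.mem_filter] at hx ⊢
      tauto
    · intro i j hij
      rw [Finset.disjoint_left]
      intro x hx hx'
      simp only [hS'def, Finset.mem_union, Finset.mem_inter, Finset.mem_filter] at hx hx'
      rcases hx with ⟨hx1, hxM1⟩ | ⟨hxM2, hpi⟩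
      · rcases hx' with ⟨hx2, _⟩ | ⟨hxM2, _⟩
        · exact (Finset.disjoint_left.1 (hdis₀ i j hij)) hx1 hx2
        · exact (Finset.disjoint_left.1 hdisj) hxM1 hxM2
      · rcases hx' with ⟨_, hxM1⟩ | ⟨_, hpj⟩
        · exact (Finset.disjoint_left.1 hdisj) hxM1 hxM2
        · exact hij (hpi ▸ hpj ▸ rfl)
  have hS'M₁ : ∀ i, S' i ∩ M₁ = S₀ i ∩ M₁ := by
    intro i; ext x
    simp only [hS'def, Finset.mem_inter, Finset.mem_union, Finset.mem_filter]
    constructor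
    · rintro ⟨⟨h1, _⟩ | ⟨h2, _⟩, hM1⟩
      · exact ⟨h1, hM1⟩
      · exact absurd hM1 (Finset.disjoint_right.1 hdisj h2)
    · rintro ⟨h1, hM1⟩; exact ⟨Or.inl ⟨h1, hM1⟩, hM1⟩
  have hS'M₂ : ∀ i, S' i ∩ M₂ = M₂.filter fun x => p x = i := by
    intro i; ext x
    simp only [hS'def, Finset.mem_inter, Finset.mem_union, Finset.mem_filter]
    constructor
    · rintro ⟨⟨_, hM1⟩ | ⟨h2, hpi⟩, hM2⟩
      · exact absurd hM2 (Finset.disjoint_left.1 hdisj hM1)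
      · exact ⟨hM2, hpi⟩
    · rintro ⟨hM2, hpi⟩; exact ⟨Or.inr ⟨hM2, hpi⟩, hM2⟩
  have hwVS' : wV S' = OPT := by
    rw [hwV, hOPTeq, hwV]
    exact Finset.sum_congr rfl fun i _ => by rw [hS'M₁]
  have hwV'S' : wV' S' = (m' : ℝ) := by
    rw [hwV']
    have : ∀ i : Fin k, ((S' i ∩ M₂).filter fun x => p x = i) = M₂.filter fun x => p x = i := by
      intro i
      rw [hS'M₂, Finset.filter_filter]
      exact Finset.filter_congr fun x _ => by tauto
    simp only [this]
    rw [← hm']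
    have := Finset.card_eq_sum_card_fiberwise (s := M₂) (t := (Finset.univ : Finset (Fin k)))
      (f := p) (fun x _ => Finset.mem_univ _)
    rw [this]; push_cast; ring
  -- OPTstar characterization
  have hstar_ge : OPT + γ * m' ≤ OPTstar := by
    have := hOPTstar.2 ⟨S', hS'valid, rfl⟩
    rwa [hwVS', hwV'S'] at this
  have hstar_le : OPTstar ≤ OPT + γ * m' := by
    obtain ⟨T, hT, hTeq⟩ := hOPTstar.1
    rw [hTeq]
    have h1 := hOPTle T hT
    have h2 := hwV'le T hT
    nlinarith [hγpos]
  have hstar : OPTstar = OPT + γ * m' := le_antisymm hstar_le hstar_ge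
  refine ⟨hstar, ?_⟩
  intro S hS β hβ hβineq
  have hkγ : γ * (ε * m' / 4) = k := by
    rw [hγ]; field_simp
  have hwVSk := hwVk S
  have key : γ * (β * m' - ε * m' / 4) ≤ γ * wV' S := by
    have h1 : β * OPTstar ≤ wV S + γ * wV' S := hβineq
    rw [hstar] at h1
    nlinarith [mul_nonneg hβ hOPT0]
  have h2 : β * m' - ε * m' / 4 ≤ wV' S := le_of_mul_le_mul_left key hγpos
  nlinarith
end

section
/- In the setting of hybrid valuations v*_i = v_i ⊕ γ v'_i with γ = 4k/(ε m'), OPT' = m', 1 ≤ OPT ≤ k, and OPT* = OPT + γ·OPT': for any allocation S and any δ ≥ 0, if v*(S) ≥ (1 − δ)·OPT* then v(S) ≥ (1 − 5kδ/ε)·OPT. -/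
open Finset

theorem stmt13 (k : ℕ) (hk : 1 ≤ k)
    (Item : Type) [Fintype Item] [DecidableEq Item]
    (M₁ M₂ : Finset Item) (hdisj : Disjoint M₁ M₂)
    (m' : ℕ) (hm' : M₂.card = m') (hm'pos : 1 ≤ m')
    (ε : ℝ) (hε0 : 0 < ε) (hε1 : ε ≤ 1)
    (γ : ℝ) (hγ : γ = 4 * k / (ε * m'))
    -- the original valuations on M₁
    (v : Fin k → Finset Item → ℝ)
    (hv0 : ∀ i, v i ∅ = 0)
    (hnonneg : ∀ i S, 0 ≤ v i S)
    (hmono : ∀ i, ∀ S T : Finset Item, S ⊆ T → v i S ≤ v i T)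
    (hmax : ∃ i, v i M₁ = 1) (hmax' : ∀ i, v i M₁ ≤ 1)
    -- the perfect valuation profile on M₂ is generated by the total allocation p
    (p : Item → Fin k)
    (Valid : (Fin k → Finset Item) → Prop)
    (hValid : ∀ S, Valid S ↔ (∀ i, S i ⊆ M₁ ∪ M₂) ∧
      ∀ i j, i ≠ j → Disjoint (S i) (S j))
    (wV wV' : (Fin k → Finset Item) → ℝ)
    (hwV : ∀ S, wV S = ∑ i, v i (S i ∩ M₁))
    (hwV' : ∀ S, wV' S = ∑ i, (((S i ∩ M₂).filter fun x => p x = i).card : ℝ))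
    (OPT OPTstar : ℝ)
    (hOPT : IsGreatest {w : ℝ | ∃ S, Valid S ∧ w = wV S} OPT)
    (hOPT1 : 1 ≤ OPT) (hOPTk : OPT ≤ (k : ℝ))
    (hOPTstar : IsGreatest {w : ℝ | ∃ S, Valid S ∧ w = wV S + γ * wV' S} OPTstar)
    (hsum : OPTstar = OPT + γ * m') :
    ∀ S, Valid S → ∀ δ : ℝ, 0 ≤ δ →
      (1 - δ) * OPTstar ≤ wV S + γ * wV' S → (1 - 5 * k * δ / ε) * OPT ≤ wV S := by
  intro S hS δ hδ hineq
  obtain ⟨hsub, hdisjS⟩ := (hValid S).mp hS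
  have hkpos : (0:ℝ) < k := by exact_mod_cast hk
  have hm'posR : (0:ℝ) < m' := by exact_mod_cast hm'pos
  have hγpos : 0 < γ := by
    rw [hγ]; positivity
  -- wV' S ≤ m'
  have hW' : wV' S ≤ (m' : ℝ) := by
    rw [hwV' S]
    have hcard : ∑ i, ((S i ∩ M₂).filter fun x => p x = i).card ≤ m' := by
      rw [← hm']
      have hdisjf : ∀ i ∈ (univ : Finset (Fin k)), ∀ j ∈ (univ : Finset (Fin k)), i ≠ j →
          Disjoint ((S i ∩ M₂).filter fun x => p x = i) ((S j ∩ M₂).filter fun x => p x = j) := by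
        intro i _ j _ hij
        exact Finset.disjoint_filter_filter
          ((hdisjS i j hij).mono Finset.inter_subset_left Finset.inter_subset_left)
      rw [← Finset.card_biUnion hdisjf]
      apply Finset.card_le_card
      intro x hx
      simp only [Finset.mem_biUnion, Finset.mem_filter, Finset.mem_inter] at hx
      obtain ⟨i, _, ⟨_, hxM₂⟩, _⟩ := hx
      exact hxM₂
    calc (∑ i, (((S i ∩ M₂).filter fun x => p x = i).card : ℝ))
        = ((∑ i, ((S i ∩ M₂).filter fun x => p x = i).card : ℕ) : ℝ) := by push_cast; ring
      _ ≤ (m' : ℝ) := by exact_mod_cast hcard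
  have hγm' : γ * m' = 4 * k / ε := by
    rw [hγ]; field_simp
  have h1 : (1 - δ) * (OPT + 4 * k / ε) ≤ wV S + γ * wV' S := by
    rw [← hγm']; rw [hsum] at hineq; linarith
  have h2 : γ * wV' S ≤ 4 * k / ε := by
    calc γ * wV' S ≤ γ * m' := by nlinarith
      _ = 4 * k / ε := hγm'
  have hεkey : ε * OPT ≤ k := by nlinarith
  have h4kε : ε * (4 * (k:ℝ) / ε) = 4 * k := by field_simp
  have hgoalε : ε * ((1 - 5 * (k:ℝ) * δ / ε) * OPT) = ε * OPT - 5 * k * δ * OPT := by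
    field_simp
  have hfin : ε * ((1 - 5 * (k:ℝ) * δ / ε) * OPT) ≤ ε * wV S := by
    rw [hgoalε]
    nlinarith [mul_le_mul_of_nonneg_left h1 hε0.le, mul_le_mul_of_nonneg_left h2 hε0.le,
      mul_nonneg hδ (sub_nonneg.mpr hεkey),
      mul_nonneg (mul_nonneg hδ hkpos.le) (sub_nonneg.mpr hOPT1), h4kε,
      mul_nonneg hδ hε0.le]
  exact le_of_mul_le_mul_left hfin hε0
end

section
/- Let R be a set of functions from a finite set M (|M| = m) to a finite set N, let L ⊆ N with |L| = n, let 2 ≤ q ≤ n, ε > 0, γ > 0, and set r = 1 − (q−1)/n − ε. Let A be the set of all f ∈ L^M with Ham(f, R) < r, and suppose |A| ≥ γ n^m. Then there exists a subset J ⊆ M with |J| = ⌈εm/2⌉ such that the number of distinct functions g ∈ L^J that occur as restrictions to J of elements of R is at least γ·((q − 1 + εn/2)/(1 − ε/2))^{εm/2}. -/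
open Finset

set_option maxHeartbeats 2000000 in
theorem stmt17 {M N : Type*} [Fintype M] [DecidableEq N]
    (n q : ℕ) (hn : 2 ≤ n) (hq2 : 2 ≤ q) (hqn : q ≤ n)
    (ε γ : ℝ) (hε : 0 < ε) (hγ : 0 < γ)
    (m : ℕ) (hm : Fintype.card M = m)
    (L : Finset N) (hL : L.card = n)
    (R : Finset (M → N))
    (b : ℕ) (hb : (b : ℝ) = ε * m / 2)
    (hA : γ * (n : ℝ) ^ m ≤
      ({f : M → N | (∀ x, f x ∈ L) ∧ ∃ g ∈ R,
        (hammingDist f g : ℝ) / m < 1 - ((q : ℝ) - 1) / n - ε}.ncard : ℝ)) :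
    ∃ J : Finset M, J.card = b ∧
      γ * ((((q : ℝ) - 1 + ε * n / 2) / (1 - ε / 2)) ^ (ε * m / 2)) ≤
        ({g : {x // x ∈ J} → N | (∀ y, g y ∈ L) ∧
          ∃ f ∈ R, ∀ y : {x // x ∈ J}, g y = f ↑y}.ncard : ℝ) := by
  classical
  set ρ : ℝ := ((q : ℝ) - 1 + ε * n / 2) / (1 - ε / 2) with hρdef
  set A : Set (M → N) := {f : M → N | (∀ x, f x ∈ L) ∧ ∃ g ∈ R,
        (hammingDist f g : ℝ) / m < 1 - ((q : ℝ) - 1) / n - ε} with hAdef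
  have hn0 : (0:ℝ) < n := by exact_mod_cast (by omega : 0 < n)
  have hq1 : (1:ℝ) ≤ (q:ℝ) - 1 := by
    have : (2:ℝ) ≤ q := by exact_mod_cast hq2
    linarith
  have hqn0 : 0 < ((q:ℝ)-1)/n := div_pos (by linarith) hn0
  have hAfin : A.Finite := by
    have hsub : A ⊆ Set.pi Set.univ (fun _ : M => (L : Set N)) := by
      intro f hf x _; exact hf.1 x
    exact (Set.Finite.pi (fun _ => L.finite_toSet)).subset hsub
  have hAne : A.Nonempty := by
    rcases Set.eq_empty_or_nonempty A with h | h
    · rw [h, Set.ncard_empty] at hA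
      push_cast at hA
      nlinarith [pow_pos hn0 m]
    · exact h
  obtain ⟨f₀, hf₀⟩ := hAne
  obtain ⟨hf₀L, g₀, hg₀R, hg₀d⟩ := id hf₀
  have hdist0 : (0:ℝ) ≤ (hammingDist f₀ g₀ : ℝ) / m := by positivity
  have hε1 : ε < 1 := by linarith
  by_cases hm0 : m = 0
  · -- degenerate case
    subst hm0
    have hMe : IsEmpty M := Fintype.card_eq_zero_iff.mp hm
    have hb0 : b = 0 := by
      have : (b:ℝ) = 0 := by rw [hb]; simp
      exact_mod_cast this
    refine ⟨∅, by simp [hb0], ?_⟩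
    rw [show ε * ((0:ℕ):ℝ) / 2 = 0 by simp, Real.rpow_zero, mul_one]
    set S : Set ({x // x ∈ (∅ : Finset M)} → N) := {g | (∀ y, g y ∈ L) ∧
          ∃ f ∈ R, ∀ y : {x // x ∈ (∅ : Finset M)}, g y = f ↑y} with hS
    have hSfin : S.Finite := by
      have hsub : S ⊆ (fun f : M → N => fun y : {x // x ∈ (∅ : Finset M)} => f ↑y) ''
          (R : Set (M → N)) := by
        rintro g ⟨-, f, hfR, hgf⟩
        exact ⟨f, hfR, by funext y; exact (hgf y).symm⟩
      exact ((R.finite_toSet).image _).subset hsub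
    have hmem : (fun y : {x // x ∈ (∅ : Finset M)} => g₀ ↑y) ∈ S := by
      refine ⟨fun y => absurd y.2 (Finset.notMem_empty _), g₀, hg₀R, fun y => rfl⟩
    have h1S : 1 ≤ (S.ncard : ℝ) := by
      have := (Set.ncard_pos hSfin).mpr ⟨_, hmem⟩
      exact_mod_cast this
    have hγ1 : γ ≤ 1 := by
      have hsub : A ⊆ {f₀} := by
        intro f _
        simp only [Set.mem_singleton_iff]
        exact funext fun x => hMe.elim x
      have h1 := Set.ncard_le_ncard hsub (Set.finite_singleton f₀)
      rw [Set.ncard_singleton] at h1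
      have h2 : (A.ncard : ℝ) ≤ 1 := by exact_mod_cast h1
      calc γ = γ * (n:ℝ)^(0:ℕ) := by simp
        _ ≤ (A.ncard : ℝ) := hA
        _ ≤ 1 := h2
    linarith
  · -- main case
    have hm1 : 1 ≤ m := Nat.one_le_iff_ne_zero.mpr hm0
    have hm0R : (0:ℝ) < m := by exact_mod_cast hm1
    set x : ℝ := (((q:ℝ)-1)/n + ε) * m with hxdef
    have hx0 : 0 ≤ x := by
      apply mul_nonneg _ hm0R.le
      linarith
    set t : ℕ := ⌊x⌋₊ + 1 with htdef
    have hxt : x < t := by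
      have := Nat.lt_floor_add_one x
      push_cast
      exact_mod_cast this
    -- choose closest codeword
    have hchoice : ∀ f ∈ A, ∃ g ∈ R, (hammingDist f g : ℝ)/m < 1 - ((q:ℝ)-1)/n - ε :=
      fun f hf => hf.2
    choose! G hGR hGd using hchoice
    set I : (M → N) → Finset M := fun f => univ.filter (fun y => f y = G f y) with hIdef
    have hIcard : ∀ f ∈ A, x < ((I f).card : ℝ) := by
      intro f hf
      have hd : (hammingDist f (G f) : ℝ) < (1 - ((q:ℝ)-1)/n - ε) * m := by
        have h := hGd f hf
        rwa [div_lt_iff₀ hm0R] at h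
      have hsplit : (I f).card + hammingDist f (G f) = m := by
        have h := Finset.card_filter_add_card_filter_not
          (s := (univ : Finset M)) (p := fun y => f y = G f y)
        rw [card_univ, hm] at h
        convert h using 3
        rfl
      have hIc : ((I f).card : ℝ) = (m : ℝ) - hammingDist f (G f) := by
        have : ((I f).card : ℝ) + hammingDist f (G f) = m := by exact_mod_cast hsplit
        linarith
      rw [hIc, hxdef]
      nlinarith
    have htI : ∀ f ∈ A, t ≤ (I f).card := by
      intro f hf
      have h := (Nat.floor_lt hx0).mpr (hIcard f hf)
      omega
    have htm : t ≤ m := by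
      have h1 := htI f₀ hf₀
      have h2 : (I f₀).card ≤ m := by
        calc (I f₀).card ≤ (univ : Finset M).card := card_filter_le _ _
          _ = m := by rw [card_univ, hm]
      omega
    have htmR : (t:ℝ) ≤ m := by exact_mod_cast htm
    have hbm : b ≤ m := by
      have h : (b:ℝ) ≤ m := by rw [hb]; nlinarith
      exact_mod_cast h
    have hbt : b < t := by
      have h : (b:ℝ) < t := by rw [hb]; nlinarith
      exact_mod_cast h
    set FA := hAfin.toFinset with hFA
    have hAcard : (A.ncard : ℝ) = FA.card := by
      rw [Set.ncard_eq_toFinset_card _ hAfin]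
    set 𝒥 := Finset.powersetCard b (univ : Finset M) with h𝒥
    have h𝒥card : 𝒥.card = m.choose b := by
      rw [h𝒥, Finset.card_powersetCard, card_univ, hm]
    have h𝒥ne : 𝒥.Nonempty := Finset.powersetCard_nonempty.mpr (by rw [card_univ, hm]; exact hbm)
    have hswap : ∑ J ∈ 𝒥, (FA.filter fun f => J ⊆ I f).card
        = ∑ f ∈ FA, (𝒥.filter fun J => J ⊆ I f).card := by
      simp_rw [Finset.card_filter]
      exact Finset.sum_comm
    have hinner : ∀ f ∈ FA, (𝒥.filter fun J => J ⊆ I f).card = ((I f).card).choose b := by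
      intro f _
      rw [← Finset.card_powersetCard b (I f)]
      congr 1
      ext J
      simp only [Finset.mem_filter, h𝒥, Finset.mem_powersetCard]
      constructor
      · rintro ⟨⟨-, hJc⟩, hJI⟩; exact ⟨hJI, hJc⟩
      · rintro ⟨hJI, hJc⟩; exact ⟨⟨Finset.subset_univ _, hJc⟩, hJI⟩
    have hlower : FA.card * t.choose b ≤ ∑ J ∈ 𝒥, (FA.filter fun f => J ⊆ I f).card := by
      rw [hswap]
      calc FA.card * t.choose b = ∑ _f ∈ FA, t.choose b := by
            rw [Finset.sum_const, smul_eq_mul]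
        _ ≤ ∑ f ∈ FA, (𝒥.filter fun J => J ⊆ I f).card := by
            refine Finset.sum_le_sum fun f hf => ?_
            rw [hinner f hf]
            exact Nat.choose_le_choose b (htI f (hAfin.mem_toFinset.mp hf))
    obtain ⟨J, hJ𝒥, hJmax⟩ := Finset.exists_max_image 𝒥
      (fun J => (FA.filter fun f => J ⊆ I f).card) h𝒥ne
    have hJb : J.card = b := (Finset.mem_powersetCard.mp hJ𝒥).2
    set AJ := FA.filter (fun f => J ⊆ I f) with hAJ
    have hpig : FA.card * t.choose b ≤ m.choose b * AJ.card := by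
      calc FA.card * t.choose b ≤ ∑ J' ∈ 𝒥, (FA.filter fun f => J' ⊆ I f).card := hlower
        _ ≤ ∑ _J' ∈ 𝒥, AJ.card := Finset.sum_le_sum fun J' hJ' => hJmax J' hJ'
        _ = 𝒥.card * AJ.card := by rw [Finset.sum_const, smul_eq_mul]
        _ = m.choose b * AJ.card := by rw [h𝒥card]
    set S : Set ({x // x ∈ J} → N) := {g | (∀ y, g y ∈ L) ∧
          ∃ f ∈ R, ∀ y : {x // x ∈ J}, g y = f ↑y} with hS
    have hSfin : S.Finite := by
      have hsub : S ⊆ (fun f : M → N => fun y : {x // x ∈ J} => f ↑y) '' (R : Set (M → N)) := by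
        rintro g ⟨-, f, hfR, hgf⟩
        exact ⟨f, hfR, by funext y; exact (hgf y).symm⟩
      exact ((R.finite_toSet).image _).subset hsub
    set φ : (M → N) → ({x // x ∈ J} → N) := fun f => fun y => f ↑y with hφ
    have himg : ∀ a ∈ AJ.image φ, a ∈ S := by
      intro a ha
      obtain ⟨f, hfAJ, rfl⟩ := Finset.mem_image.mp ha
      obtain ⟨hfFA, hfI⟩ := Finset.mem_filter.mp hfAJ
      have hfA : f ∈ A := hAfin.mem_toFinset.mp hfFA
      refine ⟨fun y => hfA.1 y, G f, hGR f hfA, fun y => ?_⟩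
      exact (Finset.mem_filter.mp (hfI y.2)).2
    have himgcard : (AJ.image φ).card ≤ S.ncard := by
      have h1 : ((AJ.image φ : Finset _) : Set _) ⊆ S := fun a ha => himg a ha
      calc (AJ.image φ).card = ((AJ.image φ : Finset _) : Set _).ncard :=
            (Set.ncard_coe_finset _).symm
        _ ≤ S.ncard := Set.ncard_le_ncard h1 hSfin
    have hLne : L.Nonempty := Finset.card_pos.mp (by omega)
    obtain ⟨l₀, hl₀⟩ := hLne
    have hfiber : ∀ a ∈ AJ.image φ, (AJ.filter fun f => φ f = a).card ≤ n ^ (m - b) := by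
      intro a _
      set ψ : (M → N) → ({x // x ∈ (Jᶜ : Finset M)} → {v // v ∈ L}) :=
        fun f y => if h : f ↑y ∈ L then ⟨f ↑y, h⟩ else ⟨l₀, hl₀⟩ with hψ
      have hinj : ∀ f₁ ∈ AJ.filter (fun f => φ f = a), ∀ f₂ ∈ AJ.filter (fun f => φ f = a),
          ψ f₁ = ψ f₂ → f₁ = f₂ := by
        intro f₁ hf₁ f₂ hf₂ hpsi
        obtain ⟨hf₁AJ, hf₁a⟩ := Finset.mem_filter.mp hf₁
        obtain ⟨hf₂AJ, hf₂a⟩ := Finset.mem_filter.mp hf₂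
        have hf₁A : f₁ ∈ A := hAfin.mem_toFinset.mp (Finset.mem_filter.mp hf₁AJ).1
        have hf₂A : f₂ ∈ A := hAfin.mem_toFinset.mp (Finset.mem_filter.mp hf₂AJ).1
        funext z
        by_cases hz : z ∈ J
        · have h1 := congrFun hf₁a ⟨z, hz⟩
          have h2 := congrFun hf₂a ⟨z, hz⟩
          rw [hφ] at h1 h2
          simp only at h1 h2
          rw [h1, h2]
        · have hz' : z ∈ (Jᶜ : Finset M) := Finset.mem_compl.mpr hz
          have h3 := congrFun hpsi ⟨z, hz'⟩
          rw [hψ] at h3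
          simp only [dif_pos (hf₁A.1 z), dif_pos (hf₂A.1 z)] at h3
          exact congrArg Subtype.val h3
      have hcard := Finset.card_le_card_of_injOn ψ (fun f _ => Finset.mem_univ (ψ f))
        (fun f₁ h₁ f₂ h₂ h => hinj f₁ h₁ f₂ h₂ h)
      calc (AJ.filter fun f => φ f = a).card
          ≤ (univ : Finset ({x // x ∈ (Jᶜ : Finset M)} → {v // v ∈ L})).card := hcard
        _ = n ^ (m - b) := by
            rw [Finset.card_univ, Fintype.card_fun, Fintype.card_coe, Fintype.card_coe,
              hL, Finset.card_compl, hm, hJb]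
    have hAJcard : AJ.card ≤ n ^ (m - b) * S.ncard := by
      calc AJ.card ≤ n^(m-b) * (AJ.image φ).card := Finset.card_le_mul_card_image AJ _ hfiber
        _ ≤ n^(m-b) * S.ncard := Nat.mul_le_mul_left _ himgcard
    -- real arithmetic
    have hbR : (b:ℝ) < (m:ℝ) := by exact_mod_cast lt_of_lt_of_le hbt htm
    have hmb0 : (0:ℝ) < (m:ℝ) - b := by linarith
    have hρ0 : 0 ≤ ρ := by
      rw [hρdef]
      have h1 : (0:ℝ) ≤ ε * n / 2 := by positivity
      apply div_nonneg <;> linarith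
    have hfac : ∀ i ∈ Finset.range b, ρ * ((m:ℝ) - i) ≤ (n:ℝ) * ((t:ℝ) - i) := by
      intro i hi
      have hiR : (i:ℝ) < b := by exact_mod_cast Finset.mem_range.mp hi
      have hmi0 : (0:ℝ) < (m:ℝ) - i := by linarith
      have hmB : (m:ℝ) - b = (1 - ε/2) * m := by rw [hb]; ring
      have hnum : ((q:ℝ) - 1 + ε*n/2) * m ≤ (n:ℝ) * ((t:ℝ) - b) := by
        have he : (n:ℝ)*(x - b) = ((q:ℝ)-1+ε*n/2)*m := by
          rw [hxdef, hb]; field_simp; ring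
        nlinarith [hxt]
      have hρle : ρ * ((m:ℝ) - b) ≤ (n:ℝ) * ((t:ℝ) - b) := by
        have he2 : ρ * ((m:ℝ) - b) = ((q:ℝ)-1+ε*n/2)*m := by
          have hne : (1:ℝ) - ε/2 ≠ 0 := by linarith
          rw [hρdef, hmB]
          field_simp
          rw [div_self (by linarith : (2:ℝ) - ε ≠ 0)]
        linarith
      have hstep : ((t:ℝ) - b) * ((m:ℝ) - i) ≤ ((t:ℝ) - i) * ((m:ℝ) - b) := by
        nlinarith [mul_nonneg (sub_nonneg.mpr htmR) (sub_nonneg.mpr hiR.le)]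
      -- combine: ρ(m-i) ≤ n(t-b)(m-i)/(m-b) ≤ n(t-i)
      have h1 : ρ * ((m:ℝ) - i) * ((m:ℝ) - b) ≤ (n:ℝ) * ((t:ℝ) - i) * ((m:ℝ) - b) := by
        calc ρ * ((m:ℝ) - i) * ((m:ℝ) - b) = (ρ * ((m:ℝ) - b)) * ((m:ℝ) - i) := by ring
          _ ≤ ((n:ℝ) * ((t:ℝ) - b)) * ((m:ℝ) - i) := by
              apply mul_le_mul_of_nonneg_right hρle hmi0.le
          _ ≤ (n:ℝ) * (((t:ℝ) - i) * ((m:ℝ) - b)) := by nlinarith [hstep, hn0]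
          _ = (n:ℝ) * ((t:ℝ) - i) * ((m:ℝ) - b) := by ring
      exact le_of_mul_le_mul_right h1 hmb0
    have hprod : ρ^b * ∏ i ∈ Finset.range b, ((m:ℝ) - i)
        ≤ (n:ℝ)^b * ∏ i ∈ Finset.range b, ((t:ℝ) - i) := by
      have h := Finset.prod_le_prod (f := fun i : ℕ => ρ * ((m:ℝ) - i))
        (g := fun i : ℕ => (n:ℝ) * ((t:ℝ) - i)) (s := Finset.range b)
        (fun i hi => by
          have hiR : (i:ℝ) < b := by exact_mod_cast Finset.mem_range.mp hi
          have : (0:ℝ) ≤ (m:ℝ) - i := by linarith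
          exact mul_nonneg hρ0 this)
        hfac
      rw [Finset.prod_mul_distrib, Finset.prod_mul_distrib, Finset.prod_const,
        Finset.prod_const, Finset.card_range] at h
      exact h
    have hdescm : ∏ i ∈ Finset.range b, ((m:ℝ) - i) = ((Nat.factorial b : ℕ):ℝ) * m.choose b := by
      rw [show ((Nat.factorial b : ℕ):ℝ) * (m.choose b : ℝ) = ((Nat.factorial b * m.choose b : ℕ):ℝ) by push_cast; ring,
        ← Nat.descFactorial_eq_factorial_mul_choose, Nat.descFactorial_eq_prod_range,
        Nat.cast_prod]
      refine Finset.prod_congr rfl fun i hi => ?_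
      have : i ≤ m := le_trans (le_of_lt (Finset.mem_range.mp hi)) hbm
      push_cast [Nat.cast_sub this]
      ring
    have hdesct : ∏ i ∈ Finset.range b, ((t:ℝ) - i) = ((Nat.factorial b : ℕ):ℝ) * t.choose b := by
      rw [show ((Nat.factorial b : ℕ):ℝ) * (t.choose b : ℝ) = ((Nat.factorial b * t.choose b : ℕ):ℝ) by push_cast; ring,
        ← Nat.descFactorial_eq_factorial_mul_choose, Nat.descFactorial_eq_prod_range,
        Nat.cast_prod]
      refine Finset.prod_congr rfl fun i hi => ?_
      have : i ≤ t := le_trans (le_of_lt (Finset.mem_range.mp hi)) hbt.le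
      push_cast [Nat.cast_sub this]
      ring
    have hfactpos : (0:ℝ) < ((Nat.factorial b : ℕ):ℝ) := by
      exact_mod_cast Nat.factorial_pos b
    have hkey : ρ^b * (m.choose b : ℝ) ≤ (n:ℝ)^b * (t.choose b : ℝ) := by
      rw [hdescm, hdesct] at hprod
      have h2 : (ρ^b * (m.choose b : ℝ)) * ((Nat.factorial b : ℕ):ℝ)
          ≤ ((n:ℝ)^b * (t.choose b : ℝ)) * ((Nat.factorial b : ℕ):ℝ) := by
        nlinarith [hprod]
      exact le_of_mul_le_mul_right h2 hfactpos
    have hc2pos : (0:ℝ) < (m.choose b : ℝ) := by exact_mod_cast Nat.choose_pos hbm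
    have hnmb : (0:ℝ) < (n:ℝ)^(m-b) := pow_pos hn0 _
    have hA' : γ * (n:ℝ)^m ≤ (FA.card : ℝ) := by rwa [hAcard] at hA
    have hpigR : (FA.card:ℝ) * (t.choose b : ℝ) ≤ (m.choose b:ℝ) * (AJ.card : ℝ) := by
      exact_mod_cast hpig
    have hAJR : (AJ.card:ℝ) ≤ (n:ℝ)^(m-b) * (S.ncard : ℝ) := by exact_mod_cast hAJcard
    have hnm : (n:ℝ)^b * (n:ℝ)^(m-b) = (n:ℝ)^m := by
      rw [← pow_add]
      congr 1
      omega
    have hc1nn : (0:ℝ) ≤ (t.choose b : ℝ) := by positivity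
    have hfinal : γ * ρ^b ≤ (S.ncard : ℝ) := by
      have hchain : γ * ρ^b * ((m.choose b : ℝ) * (n:ℝ)^(m-b))
          ≤ (S.ncard:ℝ) * ((m.choose b:ℝ) * (n:ℝ)^(m-b)) := by
        calc γ * ρ^b * ((m.choose b : ℝ) * (n:ℝ)^(m-b))
            = γ * (ρ^b * (m.choose b : ℝ)) * (n:ℝ)^(m-b) := by ring
          _ ≤ γ * ((n:ℝ)^b * (t.choose b : ℝ)) * (n:ℝ)^(m-b) := by
              apply mul_le_mul_of_nonneg_right _ hnmb.le
              exact mul_le_mul_of_nonneg_left hkey hγ.le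
          _ = (γ * (n:ℝ)^m) * (t.choose b : ℝ) := by rw [← hnm]; ring
          _ ≤ (FA.card : ℝ) * (t.choose b : ℝ) := mul_le_mul_of_nonneg_right hA' hc1nn
          _ ≤ (m.choose b:ℝ) * (AJ.card : ℝ) := hpigR
          _ ≤ (m.choose b:ℝ) * ((n:ℝ)^(m-b) * (S.ncard : ℝ)) :=
              mul_le_mul_of_nonneg_left hAJR hc2pos.le
          _ = (S.ncard:ℝ) * ((m.choose b:ℝ) * (n:ℝ)^(m-b)) := by ring
      exact le_of_mul_le_mul_right hchain (by positivity)
    refine ⟨J, hJb, ?_⟩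
    rw [← hb, Real.rpow_natCast]
    exact hfinal
end
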